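/- If G is a minimal counterexample (as defined in the context), then G has no vertex of degree at least 1 all of whose neighbors have degree at most 2. -/

import Mathlib

open Set

/-- The degree of a vertex `v` in a simple graph `G`. -/
noncomputable def deg {V : Type*} (G : SimpleGraph V) (v : V) : ℕ :=
  (G.neighborSet v).ncard

/-- `S` is a dominating set of `G`: every vertex not in `S` has a neighbor in `S`. -/
def IsDomSet {V : Type*} (G : SimpleGraph V) (S : Set V) : Prop :=
  ∀ v ∉ S, ∃ u ∈ S, G.Adj u v

/-- `S` is an independent dominating set of `G`. -/
def IsIndepDomSet {V : Type*} (G : SimpleGraph V) (S : Set V) : Prop :=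
  IsDomSet G S ∧ ∀ u ∈ S, ∀ v ∈ S, ¬ G.Adj u v

/-- The independent domination number `i(G)`. -/
noncomputable def indepDomNum {V : Type*} (G : SimpleGraph V) : ℕ :=
  sInf {n | ∃ S : Set V, IsIndepDomSet G S ∧ S.ncard = n}

/-- The domination number `γ(G)`. -/
noncomputable def domNum {V : Type*} (G : SimpleGraph V) : ℕ :=
  sInf {n | ∃ S : Set V, IsDomSet G S ∧ S.ncard = n}

/-- `G` contains no cycle on 4 vertices as a subgraph. -/
def NoFourCycle {V : Type*} (G : SimpleGraph V) : Prop :=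
  ¬ ∃ a b c d : V, a ≠ b ∧ a ≠ c ∧ a ≠ d ∧ b ≠ c ∧ b ≠ d ∧ c ≠ d ∧
      G.Adj a b ∧ G.Adj b c ∧ G.Adj c d ∧ G.Adj d a

/-- `nk G k` is the number of vertices of degree `k` in `G`. -/
noncomputable def nk {V : Type*} (G : SimpleGraph V) (k : ℕ) : ℕ :=
  {v | deg G v = k}.ncard

/-- The weight of a vertex: 14, 9, 6, 5 according as its degree is 0, 1, 2, 3. -/
noncomputable def wt {V : Type*} (G : SimpleGraph V) (v : V) : ℕ :=
  if deg G v = 0 then 14 else if deg G v = 1 then 9 else if deg G v = 2 then 6 else 5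

/-- The weight of a set of vertices: the sum of their weights. -/
noncomputable def wtSet {V : Type*} (G : SimpleGraph V) (X : Set V) : ℕ :=
  ∑ᶠ v ∈ X, wt G v

/-- The weight of the whole graph `G`. -/
noncomputable def wtGraph {V : Type*} (G : SimpleGraph V) : ℕ :=
  wtSet G Set.univ

/-- `G` is a minimal counterexample: subcubic, no 4-cycle, `14·i(G) > w(G)`,
and every proper subgraph `H` of `G` satisfies `14·i(H) ≤ w(H)`. -/
def MinimalCounterexample {V : Type*} [Fintype V] (G : SimpleGraph V) : Prop :=
  (∀ v, deg G v ≤ 3) ∧ NoFourCycle G ∧ wtGraph G < 14 * indepDomNum G ∧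
    ∀ H : G.Subgraph, H ≠ ⊤ → 14 * indepDomNum H.coe ≤ wtGraph H.coe

set_option linter.unusedVariables false
set_option linter.unusedSectionVars false
section Aux
variable {V : Type*} [Fintype V]

lemma exists_IDS (G : SimpleGraph V) : ∃ S : Set V, IsIndepDomSet G S := by
  classical
  obtain ⟨S, hS, hmax0⟩ := Finite.exists_maximalFor (id : Set V → Set V)
    {T : Set V | ∀ u ∈ T, ∀ v ∈ T, ¬ G.Adj u v} (Set.toFinite _)
    ⟨∅, by simp⟩
  have hmax : ∀ T ∈ {T : Set V | ∀ u ∈ T, ∀ v ∈ T, ¬ G.Adj u v}, id S ≤ id T → id S = id T :=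
    fun T hT hle => le_antisymm hle (hmax0 hT hle)
  refine ⟨S, ?_, hS⟩
  intro v hv
  by_contra h
  push_neg at h
  have hind : ∀ u ∈ insert v S, ∀ w ∈ insert v S, ¬ G.Adj u w := by
    intro u hu w hw
    rcases hu with rfl | hu <;> rcases hw with rfl | hw
    · simp
    · exact fun hadj => h w hw hadj.symm
    · exact fun hadj => h u hu hadj
    · exact hS u hu w hw
  have := hmax _ hind (Set.subset_insert v S)
  simp only [id] at this
  exact hv (this ▸ Set.mem_insert v S)

lemma indepDomNum_le {G : SimpleGraph V} {S : Set V} (h : IsIndepDomSet G S) :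
    indepDomNum G ≤ S.ncard := Nat.sInf_le ⟨S, h, rfl⟩

lemma exists_IDS_card (G : SimpleGraph V) :
    ∃ S : Set V, IsIndepDomSet G S ∧ S.ncard = indepDomNum G := by
  obtain ⟨S, hS⟩ := exists_IDS G
  have : S.ncard ∈ {n | ∃ S : Set V, IsIndepDomSet G S ∧ S.ncard = n} := ⟨S, hS, rfl⟩
  exact Nat.sInf_mem ⟨S.ncard, this⟩

end Aux

section Aux2
variable {V : Type*} [Fintype V] {G : SimpleGraph V}

/-- abbreviation for the induced subgraph after deleting `A` -/
noncomputable abbrev delG (G : SimpleGraph V) (A : Set V) : G.Subgraph :=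
  (⊤ : G.Subgraph).deleteVerts A

lemma delG_verts (A : Set V) : (delG G A).verts = Set.univ \ A := by
  simp [delG]

lemma mem_delG_verts {A : Set V} {x : V} (hx : x ∉ A) : x ∈ (delG G A).verts :=
  (Set.ext_iff.mp (delG_verts (G := G) A) x).mpr ⟨Set.mem_univ x, hx⟩

lemma delG_not_mem {A : Set V} (u : ↥(delG G A).verts) : (u : V) ∉ A :=
  ((Set.ext_iff.mp (delG_verts (G := G) A) u.val).mp u.2).2

lemma delG_ne_top {A : Set V} (hA : A.Nonempty) : delG G A ≠ ⊤ := by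
  intro h
  obtain ⟨a, ha⟩ := hA
  have hv : (delG G A).verts = (⊤ : G.Subgraph).verts := by rw [h]
  rw [delG_verts, SimpleGraph.Subgraph.verts_top] at hv
  have : a ∈ Set.univ \ A := by rw [hv]; exact Set.mem_univ a
  exact this.2 ha

lemma delG_coe_adj {A : Set V} (u w : ↥(delG G A).verts) :
    (delG G A).coe.Adj u w ↔ G.Adj u.val w.val := by
  constructor
  · intro h
    rw [SimpleGraph.Subgraph.coe_adj, SimpleGraph.Subgraph.deleteVerts_adj] at h
    exact h.2.2.2.2
  · intro h
    rw [SimpleGraph.Subgraph.coe_adj, SimpleGraph.Subgraph.deleteVerts_adj]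
    exact ⟨trivial, delG_not_mem u, trivial, delG_not_mem w, h⟩

lemma deg_delG {A : Set V} (x : V) (hx : x ∈ (delG G A).verts) :
    deg (delG G A).coe ⟨x, hx⟩ = (G.neighborSet x \ A).ncard := by
  have himg : Subtype.val '' ((delG G A).coe.neighborSet ⟨x, hx⟩)
      = G.neighborSet x \ A := by
    ext y
    simp only [Set.mem_image, SimpleGraph.mem_neighborSet, Set.mem_diff]
    constructor
    · rintro ⟨u, hadj, rfl⟩
      rw [delG_coe_adj] at hadj
      exact ⟨hadj, delG_not_mem u⟩
    · rintro ⟨hadj, hyA⟩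
      exact ⟨⟨y, mem_delG_verts hyA⟩, (delG_coe_adj _ _).mpr hadj, rfl⟩
  rw [deg, ← himg, Set.ncard_image_of_injective _ Subtype.val_injective]

lemma transfer (G : SimpleGraph V) (A D : Set V) (hDA : D ⊆ A)
    (hind : ∀ d1 ∈ D, ∀ d2 ∈ D, ¬ G.Adj d1 d2)
    (hcl : ∀ d ∈ D, ∀ x : V, G.Adj d x → x ∈ A)
    (hdom : ∀ a ∈ A, a ∈ D ∨ ∃ d ∈ D, G.Adj d a) :
    indepDomNum G ≤ indepDomNum (delG G A).coe + D.ncard := by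
  classical
  haveI : Fintype ↥(delG G A).verts := (Set.toFinite _).fintype
  obtain ⟨S, hS, hScard⟩ := exists_IDS_card (delG G A).coe
  set S' : Set V := (Subtype.val '' S) ∪ D with hS'def
  have hIDS : IsIndepDomSet G S' := by
    constructor
    · intro x hx
      by_cases hxA : x ∈ A
      · rcases hdom x hxA with hxD | ⟨d, hd, hadj⟩
        · exact absurd (Set.mem_union_right _ hxD) hx
        · exact ⟨d, Set.mem_union_right _ hd, hadj⟩
      · have hxS : (⟨x, mem_delG_verts hxA⟩ : ↥(delG G A).verts) ∉ S := by
          intro h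
          exact hx (Set.mem_union_left _ ⟨_, h, rfl⟩)
        obtain ⟨u, hu, hadj⟩ := hS.1 _ hxS
        rw [delG_coe_adj] at hadj
        exact ⟨u.val, Set.mem_union_left _ ⟨u, hu, rfl⟩, hadj⟩
    · rintro u hu w hw hadj
      rcases hu with ⟨u', hu', rfl⟩ | hu <;> rcases hw with ⟨w', hw', rfl⟩ | hw
      · exact hS.2 u' hu' w' hw' ((delG_coe_adj u' w').mpr hadj)
      · exact (delG_not_mem u') (hcl _ hw _ hadj.symm)
      · exact (delG_not_mem w') (hcl _ hu _ hadj)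
      · exact hind _ hu _ hw hadj
  calc indepDomNum G ≤ S'.ncard := indepDomNum_le hIDS
    _ ≤ (Subtype.val '' S).ncard + D.ncard := Set.ncard_union_le _ _
    _ = S.ncard + D.ncard := by rw [Set.ncard_image_of_injective _ Subtype.val_injective]
    _ = indepDomNum (delG G A).coe + D.ncard := by rw [hScard]

end Aux2
section Master
variable {V : Type*} [Fintype V] [DecidableEq V] {G : SimpleGraph V}

lemma master (hG : MinimalCounterexample G) (A D : Set V) (hne : A.Nonempty)
    (hDA : D ⊆ A)
    (hind : ∀ d1 ∈ D, ∀ d2 ∈ D, ¬ G.Adj d1 d2)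
    (hcl : ∀ d ∈ D, ∀ x : V, G.Adj d x → x ∈ A)
    (hdom : ∀ a ∈ A, a ∈ D ∨ ∃ d ∈ D, G.Adj d a)
    (E0 : Finset V) (bonus : V → ℕ)
    (hwt : ∀ (x : V) (hx : x ∈ (delG G A).verts),
      wt (delG G A).coe ⟨x, hx⟩ ≤ wt G x + (if x ∈ E0 then bonus x else 0))
    (hbound : (∑ x ∈ E0, bonus x) + 14 * D.ncard ≤ wtSet G A) : False := by
  classical
  set H := delG G A with hH
  haveI : Fintype ↥H.verts := (Set.toFinite _).fintype
  have hmin : 14 * indepDomNum H.coe ≤ wtGraph H.coe := hG.2.2.2 H (delG_ne_top hne)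
  have htr := transfer G A D hDA hind hcl hdom
  set φ : V → ℕ := fun x => if h : x ∈ H.verts then wt H.coe ⟨x, h⟩ else 0 with hφ
  set s : Finset V := (Set.toFinite ((Set.univ \ A : Set V))).toFinset with hs
  have hscoe : (↑s : Set V) = Set.univ \ A := Set.Finite.coe_toFinset _
  -- Step A : wtGraph H.coe = ∑ x in s, φ x
  have hA1 : wtGraph H.coe = ∑ x ∈ s, φ x := by
    have h0 : wtGraph H.coe = ∑ᶠ u : ↥H.verts, wt H.coe u := by
      rw [wtGraph, wtSet, finsum_mem_univ]
    have h1 : (Set.univ \ A : Set V) = Set.range (Subtype.val : ↥H.verts → V) := by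
      rw [Subtype.range_coe, hH, delG_verts]
    have h2 : ∑ᶠ x ∈ (Set.univ \ A : Set V), φ x = ∑ᶠ u : ↥H.verts, φ u.val := by
      rw [h1, finsum_mem_range Subtype.val_injective]
    have h3 : ∀ u : ↥H.verts, φ u.val = wt H.coe u := by
      intro u
      rw [hφ]
      simp only [dif_pos u.2]
    have h4 : ∑ᶠ x ∈ (Set.univ \ A : Set V), φ x = ∑ x ∈ s, φ x := by
      rw [← hscoe, finsum_mem_coe_finset]
    rw [h0, ← h4, h2]
    exact finsum_congr fun u => (h3 u).symm
  -- Step B : pointwise bound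
  have hB : ∑ x ∈ s, φ x ≤ (∑ x ∈ s, wt G x) + ∑ x ∈ E0, bonus x := by
    have hle : ∑ x ∈ s, φ x ≤ ∑ x ∈ s, (wt G x + if x ∈ E0 then bonus x else 0) := by
      apply Finset.sum_le_sum
      intro x hxs
      have hxA : x ∉ A := by
        have := (Set.Finite.mem_toFinset _).mp hxs
        exact this.2
      have hxv : x ∈ H.verts := mem_delG_verts hxA
      have : φ x = wt H.coe ⟨x, hxv⟩ := by rw [hφ]; simp only [dif_pos hxv]
      rw [this]
      exact hwt x hxv
    rw [Finset.sum_add_distrib] at hle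
    refine hle.trans ?_
    gcongr
    rw [Finset.sum_ite_mem]
    exact Finset.sum_le_sum_of_subset (Finset.inter_subset_right)
  -- Step C : weight split
  have hC : wtGraph G = wtSet G A + ∑ x ∈ s, wt G x := by
    rw [wtGraph, wtSet]
    have : (Set.univ : Set V) = A ∪ (Set.univ \ A) := by
      rw [Set.union_diff_cancel (Set.subset_univ A)]
    rw [this, finsum_mem_union Set.disjoint_sdiff_right (Set.toFinite _) (Set.toFinite _)]
    congr 1
    rw [← hscoe, finsum_mem_coe_finset]
  have hfin : 14 * indepDomNum G ≤ wtGraph G := by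
    calc 14 * indepDomNum G ≤ 14 * (indepDomNum H.coe + D.ncard) :=
          Nat.mul_le_mul_left _ htr
      _ = 14 * indepDomNum H.coe + 14 * D.ncard := by ring
      _ ≤ wtGraph H.coe + 14 * D.ncard := by omega
      _ = (∑ x ∈ s, φ x) + 14 * D.ncard := by rw [hA1]
      _ ≤ ((∑ x ∈ s, wt G x) + ∑ x ∈ E0, bonus x) + 14 * D.ncard := by omega
      _ ≤ (∑ x ∈ s, wt G x) + wtSet G A := by omega
      _ = wtGraph G := by omega
  exact absurd hG.2.2.1 (by omega)

end Master
section Utils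
variable {V : Type*} [Fintype V] {G : SimpleGraph V}

lemma wtSet_singleton (a : V) : wtSet G {a} = wt G a := finsum_mem_singleton

lemma wtSet_insert {a : V} {s : Set V} (h : a ∉ s) :
    wtSet G (insert a s) = wt G a + wtSet G s := by
  rw [wtSet, Set.insert_eq,
    finsum_mem_union (Set.disjoint_singleton_left.mpr h) (Set.toFinite _) (Set.toFinite _)]
  rw [finsum_mem_singleton]
  rfl

lemma one_le_deg_of_adj {u v : V} (h : G.Adj u v) : 1 ≤ deg G u := by
  rw [deg]
  have : (G.neighborSet u).Nonempty := ⟨v, h⟩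
  exact (Set.ncard_pos (Set.toFinite _)).mpr this

lemma nbr_singleton {v u : V} (h1 : deg G v = 1) (h : G.Adj v u) :
    G.neighborSet v = {u} := by
  rw [deg, Set.ncard_eq_one] at h1
  obtain ⟨a, ha⟩ := h1
  have : u ∈ G.neighborSet v := h
  rw [ha] at this ⊢
  rw [Set.mem_singleton_iff] at this
  rw [this]

lemma nbr_pair {v u : V} (h2 : deg G v = 2) (h : G.Adj v u) :
    ∃ w, w ≠ u ∧ G.Adj v w ∧ G.neighborSet v = {u, w} := by
  rw [deg, Set.ncard_eq_two] at h2
  obtain ⟨a, b, hab, hN⟩ := h2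
  have hu : u ∈ G.neighborSet v := h
  rw [hN] at hu
  rcases hu with rfl | rfl
  · exact ⟨b, fun hbu => hab hbu.symm, by rw [← SimpleGraph.mem_neighborSet, hN]; right; rfl, hN⟩
  · refine ⟨a, fun hau => hab hau, by rw [← SimpleGraph.mem_neighborSet, hN]; left; rfl, ?_⟩
    rw [hN, Set.pair_comm]

lemma nbr_triple {v u : V} (h3 : deg G v = 3) (h : G.Adj v u) :
    ∃ w1 w2, w1 ≠ u ∧ w2 ≠ u ∧ w1 ≠ w2 ∧ G.Adj v w1 ∧ G.Adj v w2 ∧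
      G.neighborSet v = {u, w1, w2} := by
  rw [deg, Set.ncard_eq_three] at h3
  obtain ⟨a, b, c, hab, hac, hbc, hN⟩ := h3
  have hadj : ∀ x ∈ ({a, b, c} : Set V), G.Adj v x := by
    intro x hx; rw [← hN] at hx; exact hx
  have hu : u ∈ G.neighborSet v := h
  rw [hN] at hu
  rcases hu with rfl | rfl | rfl
  · exact ⟨b, c, fun h' => hab h'.symm, fun h' => hac h'.symm, hbc,
      hadj b (by simp), hadj c (by simp), hN⟩
  · refine ⟨a, c, fun h' => hab h', fun h' => hbc h'.symm, hac,
      hadj a (by simp), hadj c (by simp), ?_⟩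
    rw [hN]; ext x; simp; tauto
  · refine ⟨a, b, fun h' => hac h', fun h' => hbc h', hab,
      hadj a (by simp), hadj b (by simp), ?_⟩
    rw [hN]; ext x; simp; tauto

lemma not_adj_right {v : V} {s : Set V} (hN : G.neighborSet v = s) {x : V}
    (hx : x ∉ s) : ¬ G.Adj x v := fun h => hx (hN ▸ (SimpleGraph.mem_neighborSet G v x).mpr h.symm)

lemma no4 (hG : MinimalCounterexample G) {a b c d : V} (hab : G.Adj a b)
    (hbc : G.Adj b c) (hcd : G.Adj c d) (hda : G.Adj d a)
    (hac : a ≠ c) (hbd : b ≠ d) : False :=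
  hG.2.1 ⟨a, b, c, d, hab.ne, hac, (hda.ne).symm, hbc.ne, hbd, hcd.ne, hab, hbc, hcd, hda⟩

/-- weight of a vertex in the deleted graph, computed from surviving degree -/
lemma wtH_eval {A : Set V} (x : V) (hx : x ∈ (delG G A).verts) :
    wt (delG G A).coe ⟨x, hx⟩ =
      (if (G.neighborSet x \ A).ncard = 0 then 14
       else if (G.neighborSet x \ A).ncard = 1 then 9
       else if (G.neighborSet x \ A).ncard = 2 then 6 else 5) := by
  rw [wt, deg_delG]

/-- if no neighbor of x lies in A, its weight is unchanged -/
lemma wt_unaffected {A : Set V} (x : V) (hx : x ∈ (delG G A).verts)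
    (h : ∀ a ∈ A, ¬ G.Adj x a) : wt (delG G A).coe ⟨x, hx⟩ = wt G x := by
  have : G.neighborSet x \ A = G.neighborSet x := by
    ext y
    simp only [Set.mem_diff, SimpleGraph.mem_neighborSet]
    exact ⟨fun h' => h'.1, fun h' => ⟨h', fun hyA => h y hyA h'⟩⟩
  rw [wtH_eval, this, wt, deg]

/-- if exactly one neighbor of x lies in A, weight goes up by at most 5 -/
lemma wt_lost_one (hG : MinimalCounterexample G) {A : Set V} (x : V)
    (hx : x ∈ (delG G A).verts) (a : V)
    (haA : a ∈ A) (hadj : G.Adj x a)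
    (huniq : ∀ b ∈ A, G.Adj x b → b = a) :
    wt (delG G A).coe ⟨x, hx⟩ ≤ wt G x + 5 := by
  have hdiff : G.neighborSet x \ A = G.neighborSet x \ {a} := by
    ext y
    simp only [Set.mem_diff, SimpleGraph.mem_neighborSet, Set.mem_singleton_iff]
    constructor
    · rintro ⟨h1, h2⟩
      exact ⟨h1, fun hy => h2 (hy ▸ haA)⟩
    · rintro ⟨h1, h2⟩
      exact ⟨h1, fun hyA => h2 (huniq y hyA h1)⟩
  have hmem : a ∈ G.neighborSet x := hadj
  have hc : (G.neighborSet x \ A).ncard = deg G x - 1 := by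
    rw [hdiff, Set.ncard_diff_singleton_of_mem hmem, deg]
  have hd1 : 1 ≤ deg G x := one_le_deg_of_adj hadj
  have hd3 : deg G x ≤ 3 := hG.1 x
  rw [wtH_eval, hc, wt]
  set d := deg G x with hd
  interval_cases d <;> norm_num

/-- if exactly one neighbor of x lies in A and x has degree ≥ 2,
weight goes up by at most 3 -/
lemma wt_lost_one' (hG : MinimalCounterexample G) {A : Set V} (x : V)
    (hx : x ∈ (delG G A).verts) (a : V)
    (haA : a ∈ A) (hadj : G.Adj x a)
    (huniq : ∀ b ∈ A, G.Adj x b → b = a) (hdeg2 : 2 ≤ deg G x) :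
    wt (delG G A).coe ⟨x, hx⟩ ≤ wt G x + 3 := by
  have hdiff : G.neighborSet x \ A = G.neighborSet x \ {a} := by
    ext y
    simp only [Set.mem_diff, SimpleGraph.mem_neighborSet, Set.mem_singleton_iff]
    constructor
    · rintro ⟨h1, h2⟩
      exact ⟨h1, fun hy => h2 (hy ▸ haA)⟩
    · rintro ⟨h1, h2⟩
      exact ⟨h1, fun hyA => h2 (huniq y hyA h1)⟩
  have hmem : a ∈ G.neighborSet x := hadj
  have hc : (G.neighborSet x \ A).ncard = deg G x - 1 := by
    rw [hdiff, Set.ncard_diff_singleton_of_mem hmem, deg]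
  have hd3 : deg G x ≤ 3 := hG.1 x
  rw [wtH_eval, hc, wt]
  set d := deg G x with hd
  interval_cases d <;> norm_num

lemma wt_ge_five (x : V) : 5 ≤ wt G x := by
  rw [wt]; split_ifs <;> norm_num

lemma wt_le_fourteen {W : Type*} (G' : SimpleGraph W) (x : W) : wt G' x ≤ 14 := by
  rw [wt]; split_ifs <;> norm_num

lemma wt_of_deg1 {x : V} (h : deg G x = 1) : wt G x = 9 := by rw [wt, h]; norm_num
lemma wt_of_deg2 {x : V} (h : deg G x = 2) : wt G x = 6 := by rw [wt, h]; norm_num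
lemma wt_of_deg3 {x : V} (h : deg G x = 3) : wt G x = 5 := by rw [wt, h]; norm_num

/-- bonus value by degree: the exact weight increase upon losing one edge -/
noncomputable def dbonus {V : Type*} (G : SimpleGraph V) (x : V) : ℕ :=
  if deg G x = 1 then 5 else if deg G x = 2 then 3 else 1

lemma wt_lost_one_b (hG : MinimalCounterexample G) {A : Set V} (x : V)
    (hx : x ∈ (delG G A).verts) (a : V)
    (haA : a ∈ A) (hadj : G.Adj x a)
    (huniq : ∀ b ∈ A, G.Adj x b → b = a) :
    wt (delG G A).coe ⟨x, hx⟩ ≤ wt G x + dbonus G x := by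
  have hdiff : G.neighborSet x \ A = G.neighborSet x \ {a} := by
    ext y
    simp only [Set.mem_diff, SimpleGraph.mem_neighborSet, Set.mem_singleton_iff]
    constructor
    · rintro ⟨h1, h2⟩
      exact ⟨h1, fun hy => h2 (hy ▸ haA)⟩
    · rintro ⟨h1, h2⟩
      exact ⟨h1, fun hyA => h2 (huniq y hyA h1)⟩
  have hmem : a ∈ G.neighborSet x := hadj
  have hc : (G.neighborSet x \ A).ncard = deg G x - 1 := by
    rw [hdiff, Set.ncard_diff_singleton_of_mem hmem, deg]
  have hd1 : 1 ≤ deg G x := one_le_deg_of_adj hadj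
  have hd3 : deg G x ≤ 3 := hG.1 x
  rw [wtH_eval, hc, wt, dbonus]
  set d := deg G x with hd
  interval_cases d <;> norm_num

lemma wt_ge_six {x : V} (h : deg G x ≤ 2) : 6 ≤ wt G x := by
  rw [wt]; split_ifs <;> omega

lemma nbr_pair_of_adj {v a b : V} (h2 : deg G v = 2) (ha : G.Adj v a)
    (hb : G.Adj v b) (hab : a ≠ b) : G.neighborSet v = {a, b} := by
  have hsub : ({a, b} : Set V) ⊆ G.neighborSet v := by
    intro w hw
    rcases hw with rfl | rfl
    · exact ha
    · exact hb
  have hcard : ({a, b} : Set V).ncard = 2 := Set.ncard_pair hab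
  refine (Set.eq_of_subset_of_ncard_le hsub ?_ (Set.toFinite _)).symm
  rw [hcard]
  rw [deg] at h2
  omega

lemma nbr_triple_of_adj {v a b c : V} (h3 : deg G v = 3) (ha : G.Adj v a)
    (hb : G.Adj v b) (hc : G.Adj v c) (hab : a ≠ b) (hac : a ≠ c) (hbc : b ≠ c) :
    G.neighborSet v = {a, b, c} := by
  have hsub : ({a, b, c} : Set V) ⊆ G.neighborSet v := by
    intro w hw
    rcases hw with rfl | rfl | rfl
    · exact ha
    · exact hb
    · exact hc
  have hcard : ({a, b, c} : Set V).ncard = 3 := by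
    rw [Set.ncard_insert_of_notMem (by simp [hab, hac]) (Set.toFinite _),
        Set.ncard_pair hbc]
  refine (Set.eq_of_subset_of_ncard_le hsub ?_ (Set.toFinite _)).symm
  rw [hcard]
  rw [deg] at h3
  omega

lemma nbr_triple_two {v a b : V} (h3 : deg G v = 3) (ha : G.Adj v a)
    (hb : G.Adj v b) (hab : a ≠ b) :
    ∃ c, c ≠ a ∧ c ≠ b ∧ G.Adj v c ∧ G.neighborSet v = {a, b, c} := by
  obtain ⟨w1, w2, h1a, h2a, h12, hw1, hw2, hN⟩ := nbr_triple h3 ha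
  have hbmem : b ∈ G.neighborSet v := hb
  rw [hN] at hbmem
  rcases hbmem with rfl | rfl | rfl
  · exact absurd rfl hab
  · refine ⟨w2, h2a, fun h => h12 h.symm, hw2, ?_⟩
    rw [hN]
  · refine ⟨w1, h1a, h12, hw1, ?_⟩
    rw [hN]; ext w; simp; tauto

end Utils
section Configs
variable {V : Type*} [Fintype V] [DecidableEq V] {G : SimpleGraph V}

/-- two adjacent vertices of degree one: contradiction -/
lemma B0 (hG : MinimalCounterexample G) {y a : V} (hadj : G.Adj a y)
    (hy : deg G y = 1) (ha : deg G a = 1) : False := by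
  have hNy : G.neighborSet y = {a} := nbr_singleton hy hadj.symm
  have hNa : G.neighborSet a = {y} := nbr_singleton ha hadj
  have hya : y ≠ a := hadj.ne'
  set A : Set V := {y, a} with hA
  refine master hG A {a} ⟨y, by simp [hA]⟩ (by simp [hA]) ?_ ?_ ?_ ∅ (fun _ => 0) ?_ ?_
  · intro d1 h1 d2 h2
    rw [Set.mem_singleton_iff] at h1 h2
    rw [h1, h2]; exact G.irrefl
  · intro d hd x hadjx
    rw [Set.mem_singleton_iff] at hd
    rw [hd] at hadjx
    have : x ∈ G.neighborSet a := hadjx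
    rw [hNa] at this
    rw [this]; simp [hA]
  · intro b hb
    rw [hA] at hb
    rcases hb with rfl | rfl
    · exact Or.inr ⟨a, rfl, hadj⟩
    · exact Or.inl rfl
  · intro x hx
    have hxA := delG_not_mem (⟨x, hx⟩ : ↥(delG G A).verts)
    have hxy : x ≠ y := by rintro rfl; exact hxA (by simp [hA])
    have hxa : x ≠ a := by rintro rfl; exact hxA (by simp [hA])
    simp only [Finset.notMem_empty, if_false, Nat.add_zero]
    rw [wt_unaffected]
    intro b hb
    rw [hA] at hb
    rcases hb with rfl | rfl
    · exact not_adj_right hNy (by simpa using hxa)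
    · exact not_adj_right hNa (by simpa using hxy)
  · have : wtSet G A = 18 := by
      rw [hA, wtSet_insert (by simp [hya]), wtSet_singleton, wt_of_deg1 hy, wt_of_deg1 ha]
    rw [this]
    simp

end Configs
section BPlus
variable {V : Type*} [Fintype V] [DecidableEq V] {G : SimpleGraph V}

/-- configuration: pendant y on a (deg 2), a's other neighbor b of degree 3
with a pendant c1 and another low-degree neighbor c2 -/
lemma C1c (hG : MinimalCounterexample G) {y a b c1 c2 : V}
    (hy : deg G y = 1) (ha : deg G a = 2) (hb : deg G b = 3)
    (hNy : G.neighborSet y = {a}) (hNa : G.neighborSet a = {y, b})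
    (hNb : G.neighborSet b = {a, c1, c2})
    (hab : G.Adj a b) (hbc1 : G.Adj b c1) (hbc2 : G.Adj b c2)
    (hc1y : c1 ≠ y) (hc2y : c2 ≠ y) (hc1a : c1 ≠ a) (hc2a : c2 ≠ a)
    (hc12 : c1 ≠ c2)
    (hdc1 : deg G c1 = 1) (hdc2 : deg G c2 ≤ 2) : False := by
  have hay : G.Adj a y := by rw [← SimpleGraph.mem_neighborSet, hNa]; left; rfl
  have hNc1 : G.neighborSet c1 = {b} := nbr_singleton hdc1 hbc1.symm
  have hya : y ≠ a := hay.ne'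
  have hyb : y ≠ b := by rintro rfl; omega
  have hanb : a ≠ b := hab.ne
  have hc1b : c1 ≠ b := hbc1.ne'
  have hc2b : c2 ≠ b := hbc2.ne'
  set A : Set V := {a, b, c1, c2} with hA
  have hmemA : ∀ x ∈ A, x = a ∨ x = b ∨ x = c1 ∨ x = c2 := by
    intro x hx
    simpa only [hA, Set.mem_insert_iff, Set.mem_singleton_iff] using hx
  have hcl : ∀ d ∈ ({b} : Set V), ∀ x : V, G.Adj d x → x ∈ A := by
    intro d hd x hadjx
    rw [Set.mem_singleton_iff] at hd
    rw [hd] at hadjx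
    have : x ∈ G.neighborSet b := hadjx
    rw [hNb] at this
    rcases this with rfl | rfl | rfl <;> simp [hA]
  have hdom : ∀ x ∈ A, x ∈ ({b} : Set V) ∨ ∃ d ∈ ({b} : Set V), G.Adj d x := by
    intro x hx
    rcases hmemA x hx with rfl | rfl | rfl | rfl
    · exact Or.inr ⟨b, rfl, hab.symm⟩
    · exact Or.inl rfl
    · exact Or.inr ⟨b, rfl, hbc1⟩
    · exact Or.inr ⟨b, rfl, hbc2⟩
  have hind : ∀ d1 ∈ ({b} : Set V), ∀ d2 ∈ ({b} : Set V), ¬ G.Adj d1 d2 := by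
    intro d1 h1 d2 h2
    rw [Set.mem_singleton_iff] at h1 h2
    rw [h1, h2]; exact G.irrefl
  have hDA : ({b} : Set V) ⊆ A := by simp [hA]
  have hne : A.Nonempty := ⟨b, by simp [hA]⟩
  have huniqy : ∀ w ∈ A, G.Adj y w → w = a := by
    intro w hw hadjw
    have : w ∈ G.neighborSet y := hadjw
    rw [hNy] at this; exact this
  have hwtA : wtSet G A = 20 + wt G c2 := by
    rw [hA,
        wtSet_insert (by
          simp only [Set.mem_insert_iff, Set.mem_singleton_iff]
          push_neg
          exact ⟨hanb, hc1a.symm, hc2a.symm⟩),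
        wtSet_insert (by
          simp only [Set.mem_insert_iff, Set.mem_singleton_iff]
          push_neg
          exact ⟨hc1b.symm, hc2b.symm⟩),
        wtSet_insert (by simpa using hc12),
        wtSet_singleton, wt_of_deg2 ha, wt_of_deg3 hb, wt_of_deg1 hdc1]
    ring
  have hDcard : ({b} : Set V).ncard = 1 := Set.ncard_singleton b
  have hc2cases : deg G c2 = 1 ∨ deg G c2 = 2 := by
    have := one_le_deg_of_adj hbc2.symm
    omega
  rcases hc2cases with hd | hd
  · -- deg c2 = 1
    have hNc2 : G.neighborSet c2 = {b} := nbr_singleton hd hbc2.symm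
    refine master hG A {b} hne hDA hind hcl hdom {y} (fun _ => 5) ?_ ?_
    · intro x hx
      have hxA := delG_not_mem (⟨x, hx⟩ : ↥(delG G A).verts)
      by_cases hxy : x = y
      · rw [if_pos (by simp [hxy])]
        refine wt_lost_one hG x hx a (by simp [hA]) (by rw [hxy]; exact hay.symm) ?_
        intro w hw hadjw
        rw [hxy] at hadjw
        exact huniqy w hw hadjw
      · rw [if_neg (by simpa using hxy), Nat.add_zero, wt_unaffected]
        intro w hw hadjw
        have hxa : x ≠ a := fun h => hxA (h ▸ (by simp [hA] : a ∈ A))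
        have hxb : x ≠ b := fun h => hxA (h ▸ (by simp [hA] : b ∈ A))
        have hxc1 : x ≠ c1 := fun h => hxA (h ▸ (by simp [hA] : c1 ∈ A))
        have hxc2 : x ≠ c2 := fun h => hxA (h ▸ (by simp [hA] : c2 ∈ A))
        rcases hmemA w hw with rfl | rfl | rfl | rfl
        · exact not_adj_right hNa (by simp [hxy, hxb]) hadjw
        · exact not_adj_right hNb (by simp [hxa, hxc1, hxc2]) hadjw
        · exact not_adj_right hNc1 (by simp [hxb]) hadjw
        · exact not_adj_right hNc2 (by simp [hxb]) hadjw
    · rw [hwtA, wt_of_deg1 hd, hDcard, Finset.sum_singleton]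
      norm_num
  · -- deg c2 = 2
    obtain ⟨z, hzb, hc2z, hNc2⟩ := nbr_pair hd hbc2.symm
    have hza : z ≠ a := by
      rintro rfl
      have : c2 ∈ G.neighborSet z := hc2z.symm
      rw [hNa] at this
      rcases this with h | h
      · exact hc2y h
      · exact hc2b h
    have hzc1 : z ≠ c1 := by
      rintro rfl
      have : c2 ∈ G.neighborSet z := hc2z.symm
      rw [hNc1] at this
      exact hc2b this
    have hzc2 : z ≠ c2 := hc2z.ne'
    have hzy : z ≠ y := by
      rintro rfl
      have : c2 ∈ G.neighborSet z := hc2z.symm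
      rw [hNy] at this
      exact hc2a this
    have hyz : y ≠ z := fun h => hzy h.symm
    refine master hG A {b} hne hDA hind hcl hdom {y, z} (fun _ => 5) ?_ ?_
    · intro x hx
      have hxA := delG_not_mem (⟨x, hx⟩ : ↥(delG G A).verts)
      by_cases hxy : x = y
      · rw [if_pos (by simp [hxy])]
        refine wt_lost_one hG x hx a (by simp [hA]) (by rw [hxy]; exact hay.symm) ?_
        intro w hw hadjw
        rw [hxy] at hadjw
        exact huniqy w hw hadjw
      · by_cases hxz : x = z
        · rw [if_pos (by simp [hxz])]
          refine wt_lost_one hG x hx c2 (by simp [hA]) (by rw [hxz]; exact hc2z.symm) ?_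
          intro w hw hadjw
          rw [hxz] at hadjw
          rcases hmemA w hw with rfl | rfl | rfl | rfl
          · have hz' := hadjw.symm
            rw [← SimpleGraph.mem_neighborSet, hNa] at hz'
            rcases hz' with h | h
            · exact absurd h hzy
            · exact absurd h hzb
          · have hz' := hadjw.symm
            rw [← SimpleGraph.mem_neighborSet, hNb] at hz'
            rcases hz' with h | h | h
            · exact absurd h hza
            · exact absurd h hzc1
            · exact absurd h hzc2
          · have hz' := hadjw.symm
            rw [← SimpleGraph.mem_neighborSet, hNc1] at hz'
            exact absurd hz' hzb
          · rfl
        · rw [if_neg (by simp [hxy, hxz]), Nat.add_zero, wt_unaffected]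
          intro w hw hadjw
          have hxa : x ≠ a := fun h => hxA (h ▸ (by simp [hA] : a ∈ A))
          have hxb : x ≠ b := fun h => hxA (h ▸ (by simp [hA] : b ∈ A))
          have hxc1 : x ≠ c1 := fun h => hxA (h ▸ (by simp [hA] : c1 ∈ A))
          have hxc2 : x ≠ c2 := fun h => hxA (h ▸ (by simp [hA] : c2 ∈ A))
          rcases hmemA w hw with rfl | rfl | rfl | rfl
          · exact not_adj_right hNa (by simp [hxy, hxb]) hadjw
          · exact not_adj_right hNb (by simp [hxa, hxc1, hxc2]) hadjw
          · exact not_adj_right hNc1 (by simp [hxb]) hadjw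
          · exact not_adj_right hNc2 (by simp [hxb, hxz]) hadjw
    · rw [hwtA, wt_of_deg2 hd, hDcard, Finset.sum_pair hyz]
      norm_num

end BPlus
section BPlus2
variable {V : Type*} [Fintype V] [DecidableEq V] {G : SimpleGraph V}

/-- no pendant vertex attached to a vertex of degree 2 -/
lemma Bplus (hG : MinimalCounterexample G) {y a : V} (hadj : G.Adj a y)
    (hy : deg G y = 1) (ha : deg G a = 2) : False := by
  have hNy : G.neighborSet y = {a} := nbr_singleton hy hadj.symm
  obtain ⟨b, hby, hab, hNa⟩ := nbr_pair ha hadj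
  have hya : y ≠ a := hadj.ne'
  have hanb : a ≠ b := hab.ne
  have hyb : y ≠ b := fun h => hby h.symm
  set A : Set V := {y, a, b} with hA
  have hmemA : ∀ x ∈ A, x = y ∨ x = a ∨ x = b := by
    intro x hx
    simpa only [hA, Set.mem_insert_iff, Set.mem_singleton_iff] using hx
  have hcl : ∀ d ∈ ({a} : Set V), ∀ x : V, G.Adj d x → x ∈ A := by
    intro d hd x hadjx
    rw [Set.mem_singleton_iff] at hd
    rw [hd] at hadjx
    have : x ∈ G.neighborSet a := hadjx
    rw [hNa] at this
    rcases this with rfl | rfl <;> simp [hA]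
  have hdom : ∀ x ∈ A, x ∈ ({a} : Set V) ∨ ∃ d ∈ ({a} : Set V), G.Adj d x := by
    intro x hx
    rcases hmemA x hx with rfl | rfl | rfl
    · exact Or.inr ⟨a, rfl, hadj⟩
    · exact Or.inl rfl
    · exact Or.inr ⟨a, rfl, hab⟩
  have hind : ∀ d1 ∈ ({a} : Set V), ∀ d2 ∈ ({a} : Set V), ¬ G.Adj d1 d2 := by
    intro d1 h1 d2 h2
    rw [Set.mem_singleton_iff] at h1 h2
    rw [h1, h2]; exact G.irrefl
  have hDA : ({a} : Set V) ⊆ A := by simp [hA]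
  have hne : A.Nonempty := ⟨a, by simp [hA]⟩
  have hDcard : ({a} : Set V).ncard = 1 := Set.ncard_singleton a
  have hwtA : wtSet G A = 15 + wt G b := by
    rw [hA,
        wtSet_insert (by
          simp only [Set.mem_insert_iff, Set.mem_singleton_iff]
          push_neg; exact ⟨hya, hyb⟩),
        wtSet_insert (by simpa using hanb),
        wtSet_singleton, wt_of_deg1 hy, wt_of_deg2 ha]
    ring
  have hdb3 : deg G b ≤ 3 := hG.1 b
  have hdb1 : 1 ≤ deg G b := one_le_deg_of_adj hab.symm
  have hdbcases : deg G b = 1 ∨ deg G b = 2 ∨ deg G b = 3 := by omega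
  rcases hdbcases with hdb | hdb | hdb
  · -- deg b = 1
    have hNb : G.neighborSet b = {a} := nbr_singleton hdb hab.symm
    refine master hG A {a} hne hDA hind hcl hdom ∅ (fun _ => 0) ?_ ?_
    · intro x hx
      have hxA := delG_not_mem (⟨x, hx⟩ : ↥(delG G A).verts)
      have hxy : x ≠ y := fun h => hxA (h ▸ (by simp [hA] : y ∈ A))
      have hxa : x ≠ a := fun h => hxA (h ▸ (by simp [hA] : a ∈ A))
      have hxb : x ≠ b := fun h => hxA (h ▸ (by simp [hA] : b ∈ A))
      simp only [Finset.notMem_empty, if_false, Nat.add_zero]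
      rw [wt_unaffected]
      intro w hw hadjw
      rcases hmemA w hw with rfl | rfl | rfl
      · exact not_adj_right hNy (by simp [hxa]) hadjw
      · exact not_adj_right hNa (by simp [hxy, hxb]) hadjw
      · exact not_adj_right hNb (by simp [hxa]) hadjw
    · rw [hwtA, wt_of_deg1 hdb, hDcard]
      norm_num
  · -- deg b = 2
    obtain ⟨c, hca, hbc, hNb⟩ := nbr_pair hdb hab.symm
    have hcy : c ≠ y := by
      rintro rfl
      have : b ∈ G.neighborSet c := hbc.symm
      rw [hNy] at this
      exact hanb this.symm
    have hcb : c ≠ b := hbc.ne'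
    refine master hG A {a} hne hDA hind hcl hdom {c} (fun _ => 5) ?_ ?_
    · intro x hx
      have hxA := delG_not_mem (⟨x, hx⟩ : ↥(delG G A).verts)
      by_cases hxc : x = c
      · rw [if_pos (by simp [hxc])]
        refine wt_lost_one hG x hx b (by simp [hA]) (by rw [hxc]; exact hbc.symm) ?_
        intro w hw hadjw
        rw [hxc] at hadjw
        rcases hmemA w hw with rfl | rfl | rfl
        · have hc' := hadjw.symm
          rw [← SimpleGraph.mem_neighborSet, hNy] at hc'
          exact absurd hc' hca
        · have hc' := hadjw.symm
          rw [← SimpleGraph.mem_neighborSet, hNa] at hc'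
          rcases hc' with h | h
          · exact absurd h hcy
          · exact absurd h hcb
        · rfl
      · rw [if_neg (by simpa using hxc), Nat.add_zero, wt_unaffected]
        intro w hw hadjw
        have hxy : x ≠ y := fun h => hxA (h ▸ (by simp [hA] : y ∈ A))
        have hxa : x ≠ a := fun h => hxA (h ▸ (by simp [hA] : a ∈ A))
        have hxb : x ≠ b := fun h => hxA (h ▸ (by simp [hA] : b ∈ A))
        rcases hmemA w hw with rfl | rfl | rfl
        · exact not_adj_right hNy (by simp [hxa]) hadjw
        · exact not_adj_right hNa (by simp [hxy, hxb]) hadjw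
        · exact not_adj_right hNb (by simp [hxa, hxc]) hadjw
    · rw [hwtA, wt_of_deg2 hdb, hDcard, Finset.sum_singleton]
      norm_num
  · -- deg b = 3
    obtain ⟨c1, c2, hc1a, hc2a, hc12, hbc1, hbc2, hNb⟩ := nbr_triple hdb hab.symm
    have hc1y : c1 ≠ y := by
      rintro rfl
      have : b ∈ G.neighborSet c1 := hbc1.symm
      rw [hNy] at this
      exact hanb this.symm
    have hc2y : c2 ≠ y := by
      rintro rfl
      have : b ∈ G.neighborSet c2 := hbc2.symm
      rw [hNy] at this
      exact hanb this.symm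
    have hc1b : c1 ≠ b := hbc1.ne'
    have hc2b : c2 ≠ b := hbc2.ne'
    by_cases hbad1 : deg G c1 = 1 ∧ deg G c2 ≤ 2
    · exact C1c hG hy ha hdb hNy hNa hNb hab hbc1 hbc2 hc1y hc2y hc1a hc2a hc12
        hbad1.1 hbad1.2
    · by_cases hbad2 : deg G c2 = 1 ∧ deg G c1 ≤ 2
      · have hNb' : G.neighborSet b = {a, c2, c1} := by
          rw [hNb]; ext w; simp; tauto
        exact C1c hG hy ha hdb hNy hNa hNb' hab hbc2 hbc1 hc2y hc1y hc2a hc1a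
          (fun h => hc12 h.symm) hbad2.1 hbad2.2
      · -- good case
        push_neg at hbad1 hbad2
        have hdc1 : 1 ≤ deg G c1 := one_le_deg_of_adj hbc1.symm
        have hdc2 : 1 ≤ deg G c2 := one_le_deg_of_adj hbc2.symm
        have hdc1' : deg G c1 ≤ 3 := hG.1 c1
        have hdc2' : deg G c2 ≤ 3 := hG.1 c2
        have huniq : ∀ c : V, c ≠ a → c ≠ y → c ≠ b → ∀ w ∈ A, G.Adj c w → w = b := by
          intro c hca' hcy' hcb' w hw hadjw
          rcases hmemA w hw with rfl | rfl | rfl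
          · have hc' := hadjw.symm
            rw [← SimpleGraph.mem_neighborSet, hNy] at hc'
            exact absurd hc' hca'
          · have hc' := hadjw.symm
            rw [← SimpleGraph.mem_neighborSet, hNa] at hc'
            rcases hc' with h | h
            · exact absurd h hcy'
            · exact absurd (show c = b by simpa using h) hcb'
          · rfl
        refine master hG A {a} hne hDA hind hcl hdom {c1, c2} (dbonus G) ?_ ?_
        · intro x hx
          have hxA := delG_not_mem (⟨x, hx⟩ : ↥(delG G A).verts)
          by_cases hxc1 : x = c1
          · rw [if_pos (by simp [hxc1])]
            refine wt_lost_one_b hG x hx b (by simp [hA])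
              (by rw [hxc1]; exact hbc1.symm) ?_
            intro w hw hadjw
            rw [hxc1] at hadjw
            exact huniq c1 hc1a hc1y hc1b w hw hadjw
          · by_cases hxc2 : x = c2
            · rw [if_pos (by simp [hxc2])]
              refine wt_lost_one_b hG x hx b (by simp [hA])
                (by rw [hxc2]; exact hbc2.symm) ?_
              intro w hw hadjw
              rw [hxc2] at hadjw
              exact huniq c2 hc2a hc2y hc2b w hw hadjw
            · rw [if_neg (by simp [hxc1, hxc2]), Nat.add_zero, wt_unaffected]
              intro w hw hadjw
              have hxy : x ≠ y := fun h => hxA (h ▸ (by simp [hA] : y ∈ A))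
              have hxa : x ≠ a := fun h => hxA (h ▸ (by simp [hA] : a ∈ A))
              have hxb : x ≠ b := fun h => hxA (h ▸ (by simp [hA] : b ∈ A))
              rcases hmemA w hw with rfl | rfl | rfl
              · exact not_adj_right hNy (by simp [hxa]) hadjw
              · exact not_adj_right hNa (by simp [hxy, hxb]) hadjw
              · exact not_adj_right hNb (by simp [hxa, hxc1, hxc2]) hadjw
        · rw [hwtA, wt_of_deg3 hdb, hDcard, Finset.sum_pair hc12]
          have hbb : dbonus G c1 + dbonus G c2 ≤ 6 := by
            rw [dbonus, dbonus]
            split_ifs <;> omega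
          omega

end BPlus2
section Deg3
variable {V : Type*} [Fintype V] [DecidableEq V] {G : SimpleGraph V}

lemma caseDeg3 (hG : MinimalCounterexample G) {v : V} (hv3 : deg G v = 3)
    (hnb : ∀ u, G.Adj v u → deg G u ≤ 2) : False := by
  have hv3' := hv3
  rw [deg, Set.ncard_eq_three] at hv3'
  obtain ⟨u1, u2, u3, h12, h13, h23, hNv⟩ := hv3'
  have hadj1 : G.Adj v u1 := by rw [← SimpleGraph.mem_neighborSet, hNv]; simp
  have hadj2 : G.Adj v u2 := by rw [← SimpleGraph.mem_neighborSet, hNv]; simp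
  have hadj3 : G.Adj v u3 := by rw [← SimpleGraph.mem_neighborSet, hNv]; simp
  have hle1 : deg G u1 ≤ 2 := hnb u1 hadj1
  have hle2 : deg G u2 ≤ 2 := hnb u2 hadj2
  have hle3 : deg G u3 ≤ 2 := hnb u3 hadj3
  have hv1 : v ≠ u1 := hadj1.ne
  have hv2 : v ≠ u2 := hadj2.ne
  have hv3'' : v ≠ u3 := hadj3.ne
  set A : Set V := {v, u1, u2, u3} with hA
  have hmemA : ∀ x ∈ A, x = v ∨ x = u1 ∨ x = u2 ∨ x = u3 := by
    intro x hx
    simpa only [hA, Set.mem_insert_iff, Set.mem_singleton_iff] using hx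
  have hNvA : ∀ x : V, G.Adj v x → x ∈ A := by
    intro x hadjx
    have : x ∈ G.neighborSet v := hadjx
    rw [hNv] at this
    rcases this with rfl | rfl | rfl <;> simp [hA]
  have hcl : ∀ d ∈ ({v} : Set V), ∀ x : V, G.Adj d x → x ∈ A := by
    intro d hd x hadjx
    rw [Set.mem_singleton_iff] at hd
    rw [hd] at hadjx
    exact hNvA x hadjx
  have hdom : ∀ x ∈ A, x ∈ ({v} : Set V) ∨ ∃ d ∈ ({v} : Set V), G.Adj d x := by
    intro x hx
    rcases hmemA x hx with rfl | rfl | rfl | rfl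
    · exact Or.inl rfl
    · exact Or.inr ⟨v, rfl, hadj1⟩
    · exact Or.inr ⟨v, rfl, hadj2⟩
    · exact Or.inr ⟨v, rfl, hadj3⟩
  have hind : ∀ d1 ∈ ({v} : Set V), ∀ d2 ∈ ({v} : Set V), ¬ G.Adj d1 d2 := by
    intro d1 hd1 d2 hd2
    rw [Set.mem_singleton_iff] at hd1 hd2
    rw [hd1, hd2]; exact G.irrefl
  have hDA : ({v} : Set V) ⊆ A := by simp [hA]
  have hne : A.Nonempty := ⟨v, by simp [hA]⟩
  have hDcard : ({v} : Set V).ncard = 1 := Set.ncard_singleton v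
  -- external set
  set Eset : Set V := (G.neighborSet u1 ∪ G.neighborSet u2 ∪ G.neighborSet u3) \ A
    with hEset
  set E0 : Finset V := (Set.toFinite Eset).toFinset with hE0
  have hmemE0 : ∀ x : V, x ∈ E0 ↔ x ∈ Eset := fun x => Set.Finite.mem_toFinset _
  -- each N ui \ A has at most one element
  have hcard_aux : ∀ u : V, G.Adj v u → ((G.neighborSet u) \ A).ncard ≤ 1 := by
    intro u hu
    have hsub : (G.neighborSet u) \ A ⊆ (G.neighborSet u) \ {v} := by
      apply Set.diff_subset_diff_right
      simp [hA]
    have hle := Set.ncard_le_ncard hsub (Set.toFinite _)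
    have hvmem : v ∈ G.neighborSet u := hu.symm
    rw [Set.ncard_diff_singleton_of_mem hvmem] at hle
    have : deg G u ≤ 2 := hnb u hu
    rw [deg] at this
    omega
  have hcardE : E0.card ≤ 3 := by
    rw [hE0, ← Set.ncard_eq_toFinset_card]
    rw [hEset, Set.union_diff_distrib, Set.union_diff_distrib]
    calc ((G.neighborSet u1 \ A ∪ G.neighborSet u2 \ A) ∪ G.neighborSet u3 \ A).ncard
        ≤ (G.neighborSet u1 \ A ∪ G.neighborSet u2 \ A).ncard
            + (G.neighborSet u3 \ A).ncard := Set.ncard_union_le _ _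
      _ ≤ ((G.neighborSet u1 \ A).ncard + (G.neighborSet u2 \ A).ncard)
            + (G.neighborSet u3 \ A).ncard := by
            have := Set.ncard_union_le (G.neighborSet u1 \ A) (G.neighborSet u2 \ A)
            omega
      _ ≤ 3 := by
            have e1 := hcard_aux u1 hadj1
            have e2 := hcard_aux u2 hadj2
            have e3 := hcard_aux u3 hadj3
            omega
  have hwtA : 23 ≤ wtSet G A := by
    have : wtSet G A = wt G v + (wt G u1 + (wt G u2 + wt G u3)) := by
      rw [hA,
          wtSet_insert (by
            simp only [Set.mem_insert_iff, Set.mem_singleton_iff]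
            push_neg; exact ⟨hv1, hv2, hv3''⟩),
          wtSet_insert (by
            simp only [Set.mem_insert_iff, Set.mem_singleton_iff]
            push_neg; exact ⟨h12, h13⟩),
          wtSet_insert (by simpa using h23),
          wtSet_singleton]
    rw [this, wt_of_deg3 hv3]
    have w1 := wt_ge_six hle1
    have w2 := wt_ge_six hle2
    have w3 := wt_ge_six hle3
    omega
  refine master hG A {v} hne hDA hind hcl hdom E0 (fun _ => 3) ?_ ?_
  · intro x hx
    have hxA := delG_not_mem (⟨x, hx⟩ : ↥(delG G A).verts)
    by_cases hxE : x ∈ E0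
    · rw [if_pos hxE]
      rw [hmemE0, hEset] at hxE
      obtain ⟨hxU, _⟩ := hxE
      have hxadj : ∃ u, (u = u1 ∨ u = u2 ∨ u = u3) ∧ G.Adj u x := by
        rcases hxU with (h | h) | h
        · exact ⟨u1, Or.inl rfl, h⟩
        · exact ⟨u2, Or.inr (Or.inl rfl), h⟩
        · exact ⟨u3, Or.inr (Or.inr rfl), h⟩
      obtain ⟨u, hu, hux⟩ := hxadj
      have hvu : G.Adj v u := by
        rcases hu with rfl | rfl | rfl
        · exact hadj1
        · exact hadj2
        · exact hadj3
      have huA : u ∈ A := by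
        rcases hu with rfl | rfl | rfl <;> simp [hA]
      have hxv : x ≠ v := fun h => hxA (h ▸ (by simp [hA] : v ∈ A))
      have huniq : ∀ w ∈ A, G.Adj x w → w = u := by
        intro w hw hadjw
        rcases hmemA w hw with rfl | h
        · exact absurd (hNvA x hadjw.symm) hxA
        · have hvw : G.Adj v w := by
            rcases h with rfl | rfl | rfl
            · exact hadj1
            · exact hadj2
            · exact hadj3
          by_cases hwu : w = u
          · exact hwu
          · exact (no4 hG hvu hux hadjw hvw.symm (Ne.symm hxv)
              (fun hh => hwu hh.symm)).elim
      -- degree of u is 2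
      have hdu : deg G u = 2 := by
        have hule : deg G u ≤ 2 := hnb u hvu
        have huge : 1 ≤ deg G u := one_le_deg_of_adj hvu.symm
        rcases (by omega : deg G u = 1 ∨ deg G u = 2) with h1 | h2
        · have : G.neighborSet u = {v} := nbr_singleton h1 hvu.symm
          have : x ∈ G.neighborSet u := hux
          rw [nbr_singleton h1 hvu.symm] at this
          exact absurd this.symm (fun hh => hxv hh.symm)
        · exact h2
      have hdx : 2 ≤ deg G x := by
        have hge : 1 ≤ deg G x := one_le_deg_of_adj hux.symm
        rcases (by omega : deg G x = 1 ∨ 2 ≤ deg G x) with h1 | h2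
        · exact absurd (Bplus hG hux h1 hdu) not_false
        · exact h2
      exact wt_lost_one' hG x hx u huA hux.symm huniq hdx
    · rw [if_neg hxE, Nat.add_zero, wt_unaffected]
      intro w hw hadjw
      rcases hmemA w hw with rfl | h
      · exact absurd (hNvA x hadjw.symm) hxA
      · apply hxE
        rw [hmemE0, hEset]
        refine ⟨?_, hxA⟩
        rcases h with rfl | rfl | rfl
        · exact Or.inl (Or.inl hadjw.symm)
        · exact Or.inl (Or.inr hadjw.symm)
        · exact Or.inr hadjw.symm
  · rw [Finset.sum_const, hDcard, smul_eq_mul]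
    omega

end Deg3
section Deg2a
variable {V : Type*} [Fintype V] [DecidableEq V] {G : SimpleGraph V}

lemma L_tri (hG : MinimalCounterexample G) {v u1 u2 : V}
    (hNv : G.neighborSet v = {u1, u2}) (h12 : u1 ≠ u2)
    (hd1 : deg G u1 ≤ 2) (hd2 : deg G u2 ≤ 2) (hadj12 : G.Adj u1 u2) : False := by
  have hadj1 : G.Adj v u1 := by rw [← SimpleGraph.mem_neighborSet, hNv]; simp
  have hadj2 : G.Adj v u2 := by rw [← SimpleGraph.mem_neighborSet, hNv]; simp
  have hdv : deg G v = 2 := by rw [deg, hNv, Set.ncard_pair h12]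
  have hdu1 : deg G u1 = 2 := by
    have hsub : ({v, u2} : Set V) ⊆ G.neighborSet u1 := by
      intro w hw
      rcases hw with rfl | rfl
      · exact hadj1.symm
      · exact hadj12
    have := Set.ncard_le_ncard hsub (Set.toFinite _)
    rw [Set.ncard_pair hadj2.ne] at this
    rw [deg]; rw [deg] at hd1; omega
  have hdu2 : deg G u2 = 2 := by
    have hsub : ({v, u1} : Set V) ⊆ G.neighborSet u2 := by
      intro w hw
      rcases hw with rfl | rfl
      · exact hadj2.symm
      · exact hadj12.symm
    have := Set.ncard_le_ncard hsub (Set.toFinite _)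
    rw [Set.ncard_pair hadj1.ne] at this
    rw [deg]; rw [deg] at hd2; omega
  have hNu1 : G.neighborSet u1 = {v, u2} := nbr_pair_of_adj hdu1 hadj1.symm hadj12 hadj2.ne
  have hNu2 : G.neighborSet u2 = {v, u1} := nbr_pair_of_adj hdu2 hadj2.symm hadj12.symm hadj1.ne
  set A : Set V := {v, u1, u2} with hA
  have hmemA : ∀ x ∈ A, x = v ∨ x = u1 ∨ x = u2 := by
    intro x hx
    simpa only [hA, Set.mem_insert_iff, Set.mem_singleton_iff] using hx
  refine master hG A {v} ⟨v, by simp [hA]⟩ (by simp [hA]) ?_ ?_ ?_ ∅ (fun _ => 0) ?_ ?_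
  · intro d1 hD1 d2 hD2
    rw [Set.mem_singleton_iff] at hD1 hD2
    rw [hD1, hD2]; exact G.irrefl
  · intro d hd x hadjx
    rw [Set.mem_singleton_iff] at hd
    rw [hd] at hadjx
    have : x ∈ G.neighborSet v := hadjx
    rw [hNv] at this
    rcases this with rfl | rfl <;> simp [hA]
  · intro x hx
    rcases hmemA x hx with rfl | rfl | rfl
    · exact Or.inl rfl
    · exact Or.inr ⟨v, rfl, hadj1⟩
    · exact Or.inr ⟨v, rfl, hadj2⟩
  · intro x hx
    have hxA := delG_not_mem (⟨x, hx⟩ : ↥(delG G A).verts)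
    have hxv : x ≠ v := fun h => hxA (h ▸ (by simp [hA] : v ∈ A))
    have hx1 : x ≠ u1 := fun h => hxA (h ▸ (by simp [hA] : u1 ∈ A))
    have hx2 : x ≠ u2 := fun h => hxA (h ▸ (by simp [hA] : u2 ∈ A))
    simp only [Finset.notMem_empty, if_false, Nat.add_zero]
    rw [wt_unaffected]
    intro w hw hadjw
    rcases hmemA w hw with rfl | rfl | rfl
    · exact not_adj_right hNv (by simp [hx1, hx2]) hadjw
    · exact not_adj_right hNu1 (by simp [hxv, hx2]) hadjw
    · exact not_adj_right hNu2 (by simp [hxv, hx1]) hadjw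
  · have hwtA : wtSet G A = 18 := by
      rw [hA,
          wtSet_insert (by
            simp only [Set.mem_insert_iff, Set.mem_singleton_iff]
            push_neg; exact ⟨hadj1.ne, hadj2.ne⟩),
          wtSet_insert (by simpa using h12),
          wtSet_singleton, wt_of_deg2 hdv, wt_of_deg2 hdu1, wt_of_deg2 hdu2]
    rw [hwtA, Set.ncard_singleton]
    simp

lemma L_pend (hG : MinimalCounterexample G) {v u1 u2 : V}
    (hNv : G.neighborSet v = {u1, u2}) (h12 : u1 ≠ u2)
    (hd1 : deg G u1 = 1) (hd2 : deg G u2 ≤ 2) : False := by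
  have hadj1 : G.Adj v u1 := by rw [← SimpleGraph.mem_neighborSet, hNv]; simp
  have hadj2 : G.Adj v u2 := by rw [← SimpleGraph.mem_neighborSet, hNv]; simp
  have hdv : deg G v = 2 := by rw [deg, hNv, Set.ncard_pair h12]
  have hNu1 : G.neighborSet u1 = {v} := nbr_singleton hd1 hadj1.symm
  set A : Set V := {v, u1, u2} with hA
  have hmemA : ∀ x ∈ A, x = v ∨ x = u1 ∨ x = u2 := by
    intro x hx
    simpa only [hA, Set.mem_insert_iff, Set.mem_singleton_iff] using hx
  have hind : ∀ d1 ∈ ({v} : Set V), ∀ d2 ∈ ({v} : Set V), ¬ G.Adj d1 d2 := by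
    intro d1 hD1 d2 hD2
    rw [Set.mem_singleton_iff] at hD1 hD2
    rw [hD1, hD2]; exact G.irrefl
  have hcl : ∀ d ∈ ({v} : Set V), ∀ x : V, G.Adj d x → x ∈ A := by
    intro d hd x hadjx
    rw [Set.mem_singleton_iff] at hd
    rw [hd] at hadjx
    have : x ∈ G.neighborSet v := hadjx
    rw [hNv] at this
    rcases this with rfl | rfl <;> simp [hA]
  have hdom : ∀ x ∈ A, x ∈ ({v} : Set V) ∨ ∃ d ∈ ({v} : Set V), G.Adj d x := by
    intro x hx
    rcases hmemA x hx with rfl | rfl | rfl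
    · exact Or.inl rfl
    · exact Or.inr ⟨v, rfl, hadj1⟩
    · exact Or.inr ⟨v, rfl, hadj2⟩
  have hne : A.Nonempty := ⟨v, by simp [hA]⟩
  have hDA : ({v} : Set V) ⊆ A := by simp [hA]
  have hwtA : wtSet G A = 15 + wt G u2 := by
    rw [hA,
        wtSet_insert (by
          simp only [Set.mem_insert_iff, Set.mem_singleton_iff]
          push_neg; exact ⟨hadj1.ne, hadj2.ne⟩),
        wtSet_insert (by simpa using h12),
        wtSet_singleton, wt_of_deg2 hdv, wt_of_deg1 hd1]
    ring
  have hd2' : 1 ≤ deg G u2 := one_le_deg_of_adj hadj2.symm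
  rcases (by omega : deg G u2 = 1 ∨ deg G u2 = 2) with hdu2 | hdu2
  · have hNu2 : G.neighborSet u2 = {v} := nbr_singleton hdu2 hadj2.symm
    refine master hG A {v} hne hDA hind hcl hdom ∅ (fun _ => 0) ?_ ?_
    · intro x hx
      have hxA := delG_not_mem (⟨x, hx⟩ : ↥(delG G A).verts)
      have hxv : x ≠ v := fun h => hxA (h ▸ (by simp [hA] : v ∈ A))
      have hx1 : x ≠ u1 := fun h => hxA (h ▸ (by simp [hA] : u1 ∈ A))
      have hx2 : x ≠ u2 := fun h => hxA (h ▸ (by simp [hA] : u2 ∈ A))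
      simp only [Finset.notMem_empty, if_false, Nat.add_zero]
      rw [wt_unaffected]
      intro w hw hadjw
      rcases hmemA w hw with rfl | rfl | rfl
      · exact not_adj_right hNv (by simp [hx1, hx2]) hadjw
      · exact not_adj_right hNu1 (by simp [hxv]) hadjw
      · exact not_adj_right hNu2 (by simp [hxv]) hadjw
    · rw [hwtA, wt_of_deg1 hdu2, Set.ncard_singleton]
      simp
  · obtain ⟨o, hov, hu2o, hNu2⟩ := nbr_pair hdu2 hadj2.symm
    have hou1 : o ≠ u1 := by
      rintro rfl
      have : u2 ∈ G.neighborSet o := hu2o.symm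
      rw [hNu1] at this
      exact hadj2.ne' this
    have hou2 : o ≠ u2 := hu2o.ne'
    have hodeg : 2 ≤ deg G o := by
      have hge : 1 ≤ deg G o := one_le_deg_of_adj hu2o.symm
      rcases (by omega : deg G o = 1 ∨ 2 ≤ deg G o) with h1 | h2
      · exact absurd (Bplus hG hu2o h1 hdu2) not_false
      · exact h2
    refine master hG A {v} hne hDA hind hcl hdom {o} (fun _ => 3) ?_ ?_
    · intro x hx
      have hxA := delG_not_mem (⟨x, hx⟩ : ↥(delG G A).verts)
      have hxv : x ≠ v := fun h => hxA (h ▸ (by simp [hA] : v ∈ A))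
      have hx1 : x ≠ u1 := fun h => hxA (h ▸ (by simp [hA] : u1 ∈ A))
      have hx2 : x ≠ u2 := fun h => hxA (h ▸ (by simp [hA] : u2 ∈ A))
      by_cases hxo : x = o
      · rw [if_pos (by simp [hxo])]
        refine wt_lost_one' hG x hx u2 (by simp [hA]) (by rw [hxo]; exact hu2o.symm) ?_
          (by rw [hxo]; exact hodeg)
        intro w hw hadjw
        rw [hxo] at hadjw
        rcases hmemA w hw with rfl | rfl | rfl
        · have ho' := hadjw.symm
          rw [← SimpleGraph.mem_neighborSet, hNv] at ho'
          rcases ho' with h | h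
          · exact absurd h hou1
          · exact absurd h hou2
        · have ho' := hadjw.symm
          rw [← SimpleGraph.mem_neighborSet, hNu1] at ho'
          exact absurd ho' hov
        · rfl
      · rw [if_neg (by simpa using hxo), Nat.add_zero, wt_unaffected]
        intro w hw hadjw
        rcases hmemA w hw with rfl | rfl | rfl
        · exact not_adj_right hNv (by simp [hx1, hx2]) hadjw
        · exact not_adj_right hNu1 (by simp [hxv]) hadjw
        · exact not_adj_right hNu2 (by simp [hxv, hxo]) hadjw
    · rw [hwtA, wt_of_deg2 hdu2, Set.ncard_singleton, Finset.sum_singleton]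
      norm_num

end Deg2a
section Deg2b
variable {V : Type*} [Fintype V] [DecidableEq V] {G : SimpleGraph V}

lemma L_x3 (hG : MinimalCounterexample G) {v u1 u2 x1 x2 : V}
    (hNv : G.neighborSet v = {u1, u2}) (h12 : u1 ≠ u2)
    (hdu1 : deg G u1 = 2) (hdu2 : deg G u2 = 2) (hn12 : ¬ G.Adj u1 u2)
    (hNu1 : G.neighborSet u1 = {v, x1}) (hNu2 : G.neighborSet u2 = {v, x2})
    (hx1v : x1 ≠ v) (hx2v : x2 ≠ v)
    (hnot : ¬ (deg G x1 = 2 ∧ deg G x2 = 2)) : False := by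
  have hadj1 : G.Adj v u1 := by rw [← SimpleGraph.mem_neighborSet, hNv]; simp
  have hadj2 : G.Adj v u2 := by rw [← SimpleGraph.mem_neighborSet, hNv]; simp
  have hdv : deg G v = 2 := by rw [deg, hNv, Set.ncard_pair h12]
  have hu1x1 : G.Adj u1 x1 := by rw [← SimpleGraph.mem_neighborSet, hNu1]; simp
  have hu2x2 : G.Adj u2 x2 := by rw [← SimpleGraph.mem_neighborSet, hNu2]; simp
  have hx1u1 : x1 ≠ u1 := hu1x1.ne'
  have hx2u2 : x2 ≠ u2 := hu2x2.ne'
  have hx1u2 : x1 ≠ u2 := by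
    rintro rfl
    exact hn12 hu1x1
  have hx2u1 : x2 ≠ u1 := by
    rintro rfl
    exact hn12 hu2x2.symm
  have hx12 : x1 ≠ x2 := by
    rintro rfl
    exact no4 hG hadj1 hu1x1 hu2x2.symm hadj2.symm hx1v.symm h12
  have hd1ge : 2 ≤ deg G x1 := by
    have hge : 1 ≤ deg G x1 := one_le_deg_of_adj hu1x1.symm
    rcases (by omega : deg G x1 = 1 ∨ 2 ≤ deg G x1) with h1 | h2
    · exact absurd (Bplus hG hu1x1 h1 hdu1) not_false
    · exact h2
  have hd2ge : 2 ≤ deg G x2 := by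
    have hge : 1 ≤ deg G x2 := one_le_deg_of_adj hu2x2.symm
    rcases (by omega : deg G x2 = 1 ∨ 2 ≤ deg G x2) with h1 | h2
    · exact absurd (Bplus hG hu2x2 h1 hdu2) not_false
    · exact h2
  set A : Set V := {v, u1, u2} with hA
  have hmemA : ∀ x ∈ A, x = v ∨ x = u1 ∨ x = u2 := by
    intro x hx
    simpa only [hA, Set.mem_insert_iff, Set.mem_singleton_iff] using hx
  refine master hG A {v} ⟨v, by simp [hA]⟩ (by simp [hA]) ?_ ?_ ?_ {x1, x2}
    (dbonus G) ?_ ?_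
  · intro d1 hD1 d2 hD2
    rw [Set.mem_singleton_iff] at hD1 hD2
    rw [hD1, hD2]; exact G.irrefl
  · intro d hd x hadjx
    rw [Set.mem_singleton_iff] at hd
    rw [hd] at hadjx
    have : x ∈ G.neighborSet v := hadjx
    rw [hNv] at this
    rcases this with rfl | rfl <;> simp [hA]
  · intro x hx
    rcases hmemA x hx with rfl | rfl | rfl
    · exact Or.inl rfl
    · exact Or.inr ⟨v, rfl, hadj1⟩
    · exact Or.inr ⟨v, rfl, hadj2⟩
  · intro x hx
    have hxA := delG_not_mem (⟨x, hx⟩ : ↥(delG G A).verts)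
    have hxv : x ≠ v := fun h => hxA (h ▸ (by simp [hA] : v ∈ A))
    have hxu1 : x ≠ u1 := fun h => hxA (h ▸ (by simp [hA] : u1 ∈ A))
    have hxu2 : x ≠ u2 := fun h => hxA (h ▸ (by simp [hA] : u2 ∈ A))
    by_cases hx1 : x = x1
    · rw [if_pos (by simp [hx1])]
      refine wt_lost_one_b hG x hx u1 (by simp [hA]) (by rw [hx1]; exact hu1x1.symm) ?_
      intro w hw hadjw
      rw [hx1] at hadjw
      rcases hmemA w hw with rfl | rfl | rfl
      · have h' := hadjw.symm
        rw [← SimpleGraph.mem_neighborSet, hNv] at h'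
        rcases h' with h | h
        · exact absurd h hx1u1
        · exact absurd h hx1u2
      · rfl
      · exact (no4 hG hadj1 hu1x1 hadjw hadj2.symm hx1v.symm h12).elim
    · by_cases hx2 : x = x2
      · rw [if_pos (by simp [hx2])]
        refine wt_lost_one_b hG x hx u2 (by simp [hA]) (by rw [hx2]; exact hu2x2.symm) ?_
        intro w hw hadjw
        rw [hx2] at hadjw
        rcases hmemA w hw with rfl | rfl | rfl
        · have h' := hadjw.symm
          rw [← SimpleGraph.mem_neighborSet, hNv] at h'
          rcases h' with h | h
          · exact absurd h hx2u1
          · exact absurd h hx2u2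
        · exact (no4 hG hadj2 hu2x2 hadjw hadj1.symm hx2v.symm (Ne.symm h12)).elim
        · rfl
      · rw [if_neg (by simp [hx1, hx2]), Nat.add_zero, wt_unaffected]
        intro w hw hadjw
        rcases hmemA w hw with rfl | rfl | rfl
        · exact not_adj_right hNv (by simp [hxu1, hxu2]) hadjw
        · exact not_adj_right hNu1 (by simp [hxv, hx1]) hadjw
        · exact not_adj_right hNu2 (by simp [hxv, hx2]) hadjw
  · have hwtA : wtSet G A = 18 := by
      rw [hA,
          wtSet_insert (by
            simp only [Set.mem_insert_iff, Set.mem_singleton_iff]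
            push_neg; exact ⟨hadj1.ne, hadj2.ne⟩),
          wtSet_insert (by simpa using h12),
          wtSet_singleton, wt_of_deg2 hdv, wt_of_deg2 hdu1, wt_of_deg2 hdu2]
    rw [hwtA, Set.ncard_singleton, Finset.sum_pair hx12]
    have hd1le : deg G x1 ≤ 3 := hG.1 x1
    have hd2le : deg G x2 ≤ 3 := hG.1 x2
    have : dbonus G x1 + dbonus G x2 ≤ 4 := by
      rw [dbonus, dbonus]
      split_ifs <;> omega
    omega

end Deg2b
section Deg2c
variable {V : Type*} [Fintype V] [DecidableEq V] {G : SimpleGraph V}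

lemma L_C5 (hG : MinimalCounterexample G) {v u1 u2 x1 x2 : V}
    (hNv : G.neighborSet v = {u1, u2}) (h12 : u1 ≠ u2)
    (hdu1 : deg G u1 = 2) (hdu2 : deg G u2 = 2) (hn12 : ¬ G.Adj u1 u2)
    (hNu1 : G.neighborSet u1 = {v, x1}) (hNu2 : G.neighborSet u2 = {v, x2})
    (hx1v : x1 ≠ v) (hx2v : x2 ≠ v)
    (hdx1 : deg G x1 = 2) (hdx2 : deg G x2 = 2)
    (hadjx : G.Adj x1 x2) : False := by
  have hadj1 : G.Adj v u1 := by rw [← SimpleGraph.mem_neighborSet, hNv]; simp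
  have hadj2 : G.Adj v u2 := by rw [← SimpleGraph.mem_neighborSet, hNv]; simp
  have hdv : deg G v = 2 := by rw [deg, hNv, Set.ncard_pair h12]
  have hu1x1 : G.Adj u1 x1 := by rw [← SimpleGraph.mem_neighborSet, hNu1]; simp
  have hu2x2 : G.Adj u2 x2 := by rw [← SimpleGraph.mem_neighborSet, hNu2]; simp
  have hx1u1 : x1 ≠ u1 := hu1x1.ne'
  have hx2u2 : x2 ≠ u2 := hu2x2.ne'
  have hx1u2 : x1 ≠ u2 := by rintro rfl; exact hn12 hu1x1
  have hx2u1 : x2 ≠ u1 := by rintro rfl; exact hn12 hu2x2.symm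
  have hx12 : x1 ≠ x2 := hadjx.ne
  have hu1x2 : u1 ≠ x2 := fun h => hx2u1 h.symm
  have hu2x1 : u2 ≠ x1 := fun h => hx1u2 h.symm
  have hNx1 : G.neighborSet x1 = {u1, x2} := nbr_pair_of_adj hdx1 hu1x1.symm hadjx hu1x2
  have hNx2 : G.neighborSet x2 = {u2, x1} := nbr_pair_of_adj hdx2 hu2x2.symm hadjx.symm hu2x1
  have hvx1 : ¬ G.Adj v x1 :=
    not_adj_right hNx1 (by simp [hadj1.ne, hx2v.symm] : v ∉ ({u1, x2} : Set V))
  have hvnex1 : v ≠ x1 := fun h => hx1v h.symm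
  set A : Set V := {v, u1, u2, x1, x2} with hA
  have hmemA : ∀ x ∈ A, x = v ∨ x = u1 ∨ x = u2 ∨ x = x1 ∨ x = x2 := by
    intro x hx
    simpa only [hA, Set.mem_insert_iff, Set.mem_singleton_iff] using hx
  have hDmem : ∀ d ∈ ({v, x1} : Set V), d = v ∨ d = x1 := by
    intro d hd
    simpa only [Set.mem_insert_iff, Set.mem_singleton_iff] using hd
  refine master hG A {v, x1} ⟨v, by simp [hA]⟩ (by
      intro d hd
      rcases hDmem d hd with rfl | rfl <;> simp [hA]) ?_ ?_ ?_ ∅ (fun _ => 0) ?_ ?_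
  · intro d1 hD1 d2 hD2
    rcases hDmem d1 hD1 with rfl | rfl <;> rcases hDmem d2 hD2 with rfl | rfl
    · exact G.irrefl
    · exact hvx1
    · exact fun h => hvx1 h.symm
    · exact G.irrefl
  · intro d hd x hadjx'
    rcases hDmem d hd with h | h
    · rw [h] at hadjx'
      have : x ∈ G.neighborSet v := hadjx'
      rw [hNv] at this
      rcases this with rfl | rfl <;> simp [hA]
    · rw [h] at hadjx'
      have : x ∈ G.neighborSet x1 := hadjx'
      rw [hNx1] at this
      rcases this with rfl | rfl <;> simp [hA]
  · intro x hx
    rcases hmemA x hx with rfl | rfl | rfl | rfl | rfl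
    · exact Or.inl (by simp)
    · exact Or.inr ⟨v, by simp, hadj1⟩
    · exact Or.inr ⟨v, by simp, hadj2⟩
    · exact Or.inl (by simp)
    · exact Or.inr ⟨x1, by simp, hadjx⟩
  · intro x hx
    have hxA := delG_not_mem (⟨x, hx⟩ : ↥(delG G A).verts)
    have hxv : x ≠ v := fun h => hxA (h ▸ (by simp [hA] : v ∈ A))
    have hxu1 : x ≠ u1 := fun h => hxA (h ▸ (by simp [hA] : u1 ∈ A))
    have hxu2 : x ≠ u2 := fun h => hxA (h ▸ (by simp [hA] : u2 ∈ A))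
    have hxx1 : x ≠ x1 := fun h => hxA (h ▸ (by simp [hA] : x1 ∈ A))
    have hxx2 : x ≠ x2 := fun h => hxA (h ▸ (by simp [hA] : x2 ∈ A))
    simp only [Finset.notMem_empty, if_false, Nat.add_zero]
    rw [wt_unaffected]
    intro w hw hadjw
    rcases hmemA w hw with rfl | rfl | rfl | rfl | rfl
    · exact not_adj_right hNv (by simp [hxu1, hxu2]) hadjw
    · exact not_adj_right hNu1 (by simp [hxv, hxx1]) hadjw
    · exact not_adj_right hNu2 (by simp [hxv, hxx2]) hadjw
    · exact not_adj_right hNx1 (by simp [hxu1, hxx2]) hadjw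
    · exact not_adj_right hNx2 (by simp [hxu2, hxx1]) hadjw
  · have hwtA : wtSet G A = 30 := by
      rw [hA,
          wtSet_insert (by
            simp only [Set.mem_insert_iff, Set.mem_singleton_iff]
            push_neg
            exact ⟨hadj1.ne, hadj2.ne, hvnex1, fun h => hx2v h.symm⟩),
          wtSet_insert (by
            simp only [Set.mem_insert_iff, Set.mem_singleton_iff]
            push_neg
            exact ⟨h12, fun h => hx1u1 h.symm, hu1x2⟩),
          wtSet_insert (by
            simp only [Set.mem_insert_iff, Set.mem_singleton_iff]
            push_neg
            exact ⟨hu2x1, fun h => hx2u2 h.symm⟩),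
          wtSet_insert (by simpa using hx12),
          wtSet_singleton, wt_of_deg2 hdv, wt_of_deg2 hdu1, wt_of_deg2 hdu2,
          wt_of_deg2 hdx1, wt_of_deg2 hdx2]
    rw [hwtA, Set.ncard_pair hvnex1]
    simp

end Deg2c
section Deg2d
variable {V : Type*} [Fintype V] [DecidableEq V] {G : SimpleGraph V}

lemma L_C6 (hG : MinimalCounterexample G) {v u1 u2 x1 x2 y : V}
    (hNv : G.neighborSet v = {u1, u2}) (h12 : u1 ≠ u2)
    (hdu1 : deg G u1 = 2) (hdu2 : deg G u2 = 2) (hn12 : ¬ G.Adj u1 u2)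
    (hNu1 : G.neighborSet u1 = {v, x1}) (hNu2 : G.neighborSet u2 = {v, x2})
    (hx1v : x1 ≠ v) (hx2v : x2 ≠ v)
    (hdx1 : deg G x1 = 2) (hdx2 : deg G x2 = 2)
    (hNx1 : G.neighborSet x1 = {u1, y}) (hNx2 : G.neighborSet x2 = {u2, y}) :
    False := by
  have hadj1 : G.Adj v u1 := by rw [← SimpleGraph.mem_neighborSet, hNv]; simp
  have hadj2 : G.Adj v u2 := by rw [← SimpleGraph.mem_neighborSet, hNv]; simp
  have hdv : deg G v = 2 := by rw [deg, hNv, Set.ncard_pair h12]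
  have hu1x1 : G.Adj u1 x1 := by rw [← SimpleGraph.mem_neighborSet, hNu1]; simp
  have hu2x2 : G.Adj u2 x2 := by rw [← SimpleGraph.mem_neighborSet, hNu2]; simp
  have hx1y : G.Adj x1 y := by rw [← SimpleGraph.mem_neighborSet, hNx1]; simp
  have hx2y : G.Adj x2 y := by rw [← SimpleGraph.mem_neighborSet, hNx2]; simp
  have hx1u1 : x1 ≠ u1 := hu1x1.ne'
  have hx2u2 : x2 ≠ u2 := hu2x2.ne'
  have hx1u2 : x1 ≠ u2 := by rintro rfl; exact hn12 hu1x1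
  have hx2u1 : x2 ≠ u1 := by rintro rfl; exact hn12 hu2x2.symm
  have hx12 : x1 ≠ x2 := by
    rintro rfl
    exact no4 hG hadj1 hu1x1 hu2x2.symm hadj2.symm hx1v.symm h12
  have hyv : y ≠ v := by
    rintro rfl
    have : x1 ∈ G.neighborSet y := hx1y.symm
    rw [hNv] at this
    rcases this with h | h
    · exact hx1u1 h
    · exact hx1u2 h
  have hyu1 : y ≠ u1 := by
    rintro rfl
    have : x2 ∈ G.neighborSet y := hx2y.symm
    rw [hNu1] at this
    rcases this with h | h
    · exact hx2v h
    · exact hx12 h.symm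
  have hyu2 : y ≠ u2 := by
    rintro rfl
    have : x1 ∈ G.neighborSet y := hx1y.symm
    rw [hNu2] at this
    rcases this with h | h
    · exact hx1v h
    · exact hx12 h
  have hyx1 : y ≠ x1 := hx1y.ne'
  have hyx2 : y ≠ x2 := hx2y.ne'
  have hnyv : ¬ G.Adj y v :=
    not_adj_right hNv (by simp [hyu1, hyu2] : y ∉ ({u1, u2} : Set V))
  have hnvy : ¬ G.Adj v y := fun h => hnyv h.symm
  have hdyge : 2 ≤ deg G y := by
    have hge : 1 ≤ deg G y := one_le_deg_of_adj hx1y.symm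
    rcases (by omega : deg G y = 1 ∨ 2 ≤ deg G y) with h1 | h2
    · exact absurd (Bplus hG hx1y h1 hdx1) not_false
    · exact h2
  have hdyle : deg G y ≤ 3 := hG.1 y
  rcases (by omega : deg G y = 2 ∨ deg G y = 3) with hdy | hdy
  · -- C6 : y has degree 2
    have hNy : G.neighborSet y = {x1, x2} := nbr_pair_of_adj hdy hx1y.symm hx2y.symm hx12
    set A : Set V := {v, u1, u2, x1, x2, y} with hA
    have hmemA : ∀ x ∈ A, x = v ∨ x = u1 ∨ x = u2 ∨ x = x1 ∨ x = x2 ∨ x = y := by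
      intro x hx
      simpa only [hA, Set.mem_insert_iff, Set.mem_singleton_iff] using hx
    have hDmem : ∀ d ∈ ({v, y} : Set V), d = v ∨ d = y := by
      intro d hd
      simpa only [Set.mem_insert_iff, Set.mem_singleton_iff] using hd
    refine master hG A {v, y} ⟨v, by simp [hA]⟩ (by
        intro d hd
        rcases hDmem d hd with rfl | rfl <;> simp [hA]) ?_ ?_ ?_ ∅ (fun _ => 0) ?_ ?_
    · intro d1 hD1 d2 hD2
      rcases hDmem d1 hD1 with h1 | h1 <;> rcases hDmem d2 hD2 with h2 | h2 <;>
        rw [h1, h2]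
      · exact G.irrefl
      · exact hnvy
      · exact hnyv
      · exact G.irrefl
    · intro d hd x hadjx'
      rcases hDmem d hd with h | h
      · rw [h] at hadjx'
        have : x ∈ G.neighborSet v := hadjx'
        rw [hNv] at this
        rcases this with rfl | rfl <;> simp [hA]
      · rw [h] at hadjx'
        have : x ∈ G.neighborSet y := hadjx'
        rw [hNy] at this
        rcases this with rfl | rfl <;> simp [hA]
    · intro x hx
      rcases hmemA x hx with rfl | rfl | rfl | rfl | rfl | rfl
      · exact Or.inl (by simp)
      · exact Or.inr ⟨v, by simp, hadj1⟩
      · exact Or.inr ⟨v, by simp, hadj2⟩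
      · exact Or.inr ⟨y, by simp, hx1y.symm⟩
      · exact Or.inr ⟨y, by simp, hx2y.symm⟩
      · exact Or.inl (by simp)
    · intro x hx
      have hxA := delG_not_mem (⟨x, hx⟩ : ↥(delG G A).verts)
      have hxv : x ≠ v := fun h => hxA (h ▸ (by simp [hA] : v ∈ A))
      have hxu1 : x ≠ u1 := fun h => hxA (h ▸ (by simp [hA] : u1 ∈ A))
      have hxu2 : x ≠ u2 := fun h => hxA (h ▸ (by simp [hA] : u2 ∈ A))
      have hxx1 : x ≠ x1 := fun h => hxA (h ▸ (by simp [hA] : x1 ∈ A))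
      have hxx2 : x ≠ x2 := fun h => hxA (h ▸ (by simp [hA] : x2 ∈ A))
      have hxy : x ≠ y := fun h => hxA (h ▸ (by simp [hA] : y ∈ A))
      simp only [Finset.notMem_empty, if_false, Nat.add_zero]
      rw [wt_unaffected]
      intro w hw hadjw
      rcases hmemA w hw with rfl | rfl | rfl | rfl | rfl | rfl
      · exact not_adj_right hNv (by simp [hxu1, hxu2]) hadjw
      · exact not_adj_right hNu1 (by simp [hxv, hxx1]) hadjw
      · exact not_adj_right hNu2 (by simp [hxv, hxx2]) hadjw
      · exact not_adj_right hNx1 (by simp [hxu1, hxy]) hadjw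
      · exact not_adj_right hNx2 (by simp [hxu2, hxy]) hadjw
      · exact not_adj_right hNy (by simp [hxx1, hxx2]) hadjw
    · have hwtA : wtSet G A = 36 := by
        rw [hA,
            wtSet_insert (by
              simp only [Set.mem_insert_iff, Set.mem_singleton_iff]
              push_neg
              exact ⟨hadj1.ne, hadj2.ne, fun h => hx1v h.symm, fun h => hx2v h.symm,
                fun h => hyv h.symm⟩),
            wtSet_insert (by
              simp only [Set.mem_insert_iff, Set.mem_singleton_iff]
              push_neg
              exact ⟨h12, fun h => hx1u1 h.symm, fun h => hx2u1 h.symm,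
                fun h => hyu1 h.symm⟩),
            wtSet_insert (by
              simp only [Set.mem_insert_iff, Set.mem_singleton_iff]
              push_neg
              exact ⟨fun h => hx1u2 h.symm, fun h => hx2u2 h.symm, fun h => hyu2 h.symm⟩),
            wtSet_insert (by
              simp only [Set.mem_insert_iff, Set.mem_singleton_iff]
              push_neg
              exact ⟨hx12, fun h => hyx1 h.symm⟩),
            wtSet_insert (by simpa using fun h => hyx2 h.symm),
            wtSet_singleton, wt_of_deg2 hdv, wt_of_deg2 hdu1, wt_of_deg2 hdu2,
            wt_of_deg2 hdx1, wt_of_deg2 hdx2, wt_of_deg2 hdy]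
      rw [hwtA, Set.ncard_pair (fun h => hyv h.symm : v ≠ y)]
      simp
  · -- C6z : y has degree 3, with third neighbor z
    obtain ⟨z, hzx1, hzx2, hyz, hNy⟩ := nbr_triple_two hdy hx1y.symm hx2y.symm hx12
    have hzy : z ≠ y := hyz.ne'
    have hzv : z ≠ v := by
      rintro rfl
      have : y ∈ G.neighborSet z := hyz.symm
      rw [hNv] at this
      rcases this with h | h
      · exact hyu1 h
      · exact hyu2 h
    have hzu1 : z ≠ u1 := by
      rintro rfl
      have : y ∈ G.neighborSet z := hyz.symm
      rw [hNu1] at this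
      rcases this with h | h
      · exact hyv h
      · exact hyx1 h
    have hzu2 : z ≠ u2 := by
      rintro rfl
      have : y ∈ G.neighborSet z := hyz.symm
      rw [hNu2] at this
      rcases this with h | h
      · exact hyv h
      · exact hyx2 h
    set A : Set V := {v, u1, u2, x1, x2, y, z} with hA
    have hmemA : ∀ x ∈ A,
        x = v ∨ x = u1 ∨ x = u2 ∨ x = x1 ∨ x = x2 ∨ x = y ∨ x = z := by
      intro x hx
      simpa only [hA, Set.mem_insert_iff, Set.mem_singleton_iff] using hx
    have hDmem : ∀ d ∈ ({v, y} : Set V), d = v ∨ d = y := by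
      intro d hd
      simpa only [Set.mem_insert_iff, Set.mem_singleton_iff] using hd
    set Eset : Set V := G.neighborSet z \ A with hEset
    set E0 : Finset V := (Set.toFinite Eset).toFinset with hE0
    have hmemE0 : ∀ x : V, x ∈ E0 ↔ x ∈ Eset := fun x => Set.Finite.mem_toFinset _
    have hdz1 : 1 ≤ deg G z := one_le_deg_of_adj hyz.symm
    have hdz3 : deg G z ≤ 3 := hG.1 z
    have hE0card : E0.card ≤ deg G z - 1 := by
      rw [hE0, ← Set.ncard_eq_toFinset_card, hEset]
      have hsub : G.neighborSet z \ A ⊆ G.neighborSet z \ {y} := by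
        apply Set.diff_subset_diff_right
        simp [hA]
      have hle := Set.ncard_le_ncard hsub (Set.toFinite _)
      have hymem : y ∈ G.neighborSet z := hyz.symm
      rw [Set.ncard_diff_singleton_of_mem hymem] at hle
      rw [deg]
      exact hle
    have hwtA : wtSet G A = 35 + wt G z := by
      rw [hA,
          wtSet_insert (by
            simp only [Set.mem_insert_iff, Set.mem_singleton_iff]
            push_neg
            exact ⟨hadj1.ne, hadj2.ne, fun h => hx1v h.symm, fun h => hx2v h.symm,
              fun h => hyv h.symm, fun h => hzv h.symm⟩),
          wtSet_insert (by
            simp only [Set.mem_insert_iff, Set.mem_singleton_iff]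
            push_neg
            exact ⟨h12, fun h => hx1u1 h.symm, fun h => hx2u1 h.symm,
              fun h => hyu1 h.symm, fun h => hzu1 h.symm⟩),
          wtSet_insert (by
            simp only [Set.mem_insert_iff, Set.mem_singleton_iff]
            push_neg
            exact ⟨fun h => hx1u2 h.symm, fun h => hx2u2 h.symm,
              fun h => hyu2 h.symm, fun h => hzu2 h.symm⟩),
          wtSet_insert (by
            simp only [Set.mem_insert_iff, Set.mem_singleton_iff]
            push_neg
            exact ⟨hx12, fun h => hyx1 h.symm, hzx1.symm⟩),
          wtSet_insert (by
            simp only [Set.mem_insert_iff, Set.mem_singleton_iff]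
            push_neg
            exact ⟨fun h => hyx2 h.symm, hzx2.symm⟩),
          wtSet_insert (by simpa using fun h => hzy h.symm),
          wtSet_singleton, wt_of_deg2 hdv, wt_of_deg2 hdu1, wt_of_deg2 hdu2,
          wt_of_deg2 hdx1, wt_of_deg2 hdx2, wt_of_deg3 hdy]
      ring
    refine master hG A {v, y} ⟨v, by simp [hA]⟩ (by
        intro d hd
        rcases hDmem d hd with rfl | rfl <;> simp [hA]) ?_ ?_ ?_ E0 (fun _ => 5) ?_ ?_
    · intro d1 hD1 d2 hD2
      rcases hDmem d1 hD1 with h1 | h1 <;> rcases hDmem d2 hD2 with h2 | h2 <;>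
        rw [h1, h2]
      · exact G.irrefl
      · exact hnvy
      · exact hnyv
      · exact G.irrefl
    · intro d hd x hadjx'
      rcases hDmem d hd with h | h
      · rw [h] at hadjx'
        have : x ∈ G.neighborSet v := hadjx'
        rw [hNv] at this
        rcases this with rfl | rfl <;> simp [hA]
      · rw [h] at hadjx'
        have : x ∈ G.neighborSet y := hadjx'
        rw [hNy] at this
        rcases this with rfl | rfl | rfl <;> simp [hA]
    · intro x hx
      rcases hmemA x hx with rfl | rfl | rfl | rfl | rfl | rfl | rfl
      · exact Or.inl (by simp)
      · exact Or.inr ⟨v, by simp, hadj1⟩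
      · exact Or.inr ⟨v, by simp, hadj2⟩
      · exact Or.inr ⟨y, by simp, hx1y.symm⟩
      · exact Or.inr ⟨y, by simp, hx2y.symm⟩
      · exact Or.inl (by simp)
      · exact Or.inr ⟨y, by simp, hyz⟩
    · intro x hx
      have hxA := delG_not_mem (⟨x, hx⟩ : ↥(delG G A).verts)
      have hxv : x ≠ v := fun h => hxA (h ▸ (by simp [hA] : v ∈ A))
      have hxu1 : x ≠ u1 := fun h => hxA (h ▸ (by simp [hA] : u1 ∈ A))
      have hxu2 : x ≠ u2 := fun h => hxA (h ▸ (by simp [hA] : u2 ∈ A))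
      have hxx1 : x ≠ x1 := fun h => hxA (h ▸ (by simp [hA] : x1 ∈ A))
      have hxx2 : x ≠ x2 := fun h => hxA (h ▸ (by simp [hA] : x2 ∈ A))
      have hxy : x ≠ y := fun h => hxA (h ▸ (by simp [hA] : y ∈ A))
      have hxz : x ≠ z := fun h => hxA (h ▸ (by simp [hA] : z ∈ A))
      by_cases hxE : x ∈ E0
      · rw [if_pos hxE]
        rw [hmemE0, hEset] at hxE
        obtain ⟨hxNz, _⟩ := hxE
        refine wt_lost_one hG x hx z (by simp [hA]) ?_ ?_
        · exact (hxNz : G.Adj z x).symm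
        · intro w hw hadjw
          rcases hmemA w hw with rfl | rfl | rfl | rfl | rfl | rfl | rfl
          · exact absurd (not_adj_right hNv (by simp [hxu1, hxu2]) hadjw) not_false
          · exact absurd (not_adj_right hNu1 (by simp [hxv, hxx1]) hadjw) not_false
          · exact absurd (not_adj_right hNu2 (by simp [hxv, hxx2]) hadjw) not_false
          · exact absurd (not_adj_right hNx1 (by simp [hxu1, hxy]) hadjw) not_false
          · exact absurd (not_adj_right hNx2 (by simp [hxu2, hxy]) hadjw) not_false
          · exact absurd (not_adj_right hNy (by simp [hxx1, hxx2, hxz]) hadjw) not_false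
          · rfl
      · rw [if_neg hxE, Nat.add_zero, wt_unaffected]
        intro w hw hadjw
        rcases hmemA w hw with rfl | rfl | rfl | rfl | rfl | rfl | rfl
        · exact not_adj_right hNv (by simp [hxu1, hxu2]) hadjw
        · exact not_adj_right hNu1 (by simp [hxv, hxx1]) hadjw
        · exact not_adj_right hNu2 (by simp [hxv, hxx2]) hadjw
        · exact not_adj_right hNx1 (by simp [hxu1, hxy]) hadjw
        · exact not_adj_right hNx2 (by simp [hxu2, hxy]) hadjw
        · exact not_adj_right hNy (by simp [hxx1, hxx2, hxz]) hadjw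
        · refine absurd ?_ hxE
          rw [hmemE0, hEset]
          exact ⟨hadjw.symm, hxA⟩
    · rw [Finset.sum_const, smul_eq_mul, Set.ncard_pair (fun h => hyv h.symm : v ≠ y),
          hwtA]
      rcases (by omega : deg G z = 1 ∨ deg G z = 2 ∨ deg G z = 3) with h | h | h
      · rw [wt_of_deg1 h]; have := hE0card; omega
      · rw [wt_of_deg2 h]; have := hE0card; omega
      · rw [wt_of_deg3 h]; have := hE0card; omega

end Deg2d
section Deg2e
variable {V : Type*} [Fintype V] [DecidableEq V] {G : SimpleGraph V}

lemma L_y3 (hG : MinimalCounterexample G) {v u1 u2 x1 x2 y1 : V}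
    (hNv : G.neighborSet v = {u1, u2}) (h12 : u1 ≠ u2)
    (hdu1 : deg G u1 = 2) (hdu2 : deg G u2 = 2) (hn12 : ¬ G.Adj u1 u2)
    (hNu1 : G.neighborSet u1 = {v, x1}) (hNu2 : G.neighborSet u2 = {v, x2})
    (hx1v : x1 ≠ v) (hx2v : x2 ≠ v)
    (hdx1 : deg G x1 = 2)
    (hNx1 : G.neighborSet x1 = {u1, y1}) (hy1u1 : y1 ≠ u1)
    (hy1x2 : y1 ≠ x2) (hdy1 : deg G y1 = 3) : False := by
  have hadj1 : G.Adj v u1 := by rw [← SimpleGraph.mem_neighborSet, hNv]; simp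
  have hadj2 : G.Adj v u2 := by rw [← SimpleGraph.mem_neighborSet, hNv]; simp
  have hdv : deg G v = 2 := by rw [deg, hNv, Set.ncard_pair h12]
  have hu1x1 : G.Adj u1 x1 := by rw [← SimpleGraph.mem_neighborSet, hNu1]; simp
  have hu2x2 : G.Adj u2 x2 := by rw [← SimpleGraph.mem_neighborSet, hNu2]; simp
  have hx1y1 : G.Adj x1 y1 := by rw [← SimpleGraph.mem_neighborSet, hNx1]; simp
  have hx1u1 : x1 ≠ u1 := hu1x1.ne'
  have hx2u2 : x2 ≠ u2 := hu2x2.ne'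
  have hx1u2 : x1 ≠ u2 := by rintro rfl; exact hn12 hu1x1
  have hx2u1 : x2 ≠ u1 := by rintro rfl; exact hn12 hu2x2.symm
  have hx12 : x1 ≠ x2 := by
    rintro rfl
    exact no4 hG hadj1 hu1x1 hu2x2.symm hadj2.symm hx1v.symm h12
  have hy1v : y1 ≠ v := by
    rintro rfl
    have : x1 ∈ G.neighborSet y1 := hx1y1.symm
    rw [hNv] at this
    rcases this with h | h
    · exact hx1u1 h
    · exact hx1u2 h
  have hy1u2 : y1 ≠ u2 := by
    rintro rfl
    exact no4 hG hadj1 hu1x1 hx1y1 hadj2.symm hx1v.symm h12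
  have hy1x1 : y1 ≠ x1 := hx1y1.ne'
  have hu2x1 : u2 ≠ x1 := fun h => hx1u2 h.symm
  set A : Set V := {x1, u1, v} with hA
  have hmemA : ∀ x ∈ A, x = x1 ∨ x = u1 ∨ x = v := by
    intro x hx
    simpa only [hA, Set.mem_insert_iff, Set.mem_singleton_iff] using hx
  have hy1nu2 : y1 ≠ u2 := hy1u2
  refine master hG A {u1} ⟨u1, by simp [hA]⟩ (by simp [hA]) ?_ ?_ ?_ {y1, u2}
    (dbonus G) ?_ ?_
  · intro d1 hD1 d2 hD2
    rw [Set.mem_singleton_iff] at hD1 hD2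
    rw [hD1, hD2]; exact G.irrefl
  · intro d hd x hadjx
    rw [Set.mem_singleton_iff] at hd
    rw [hd] at hadjx
    have : x ∈ G.neighborSet u1 := hadjx
    rw [hNu1] at this
    rcases this with rfl | rfl <;> simp [hA]
  · intro x hx
    rcases hmemA x hx with rfl | rfl | rfl
    · exact Or.inr ⟨u1, rfl, hu1x1⟩
    · exact Or.inl rfl
    · exact Or.inr ⟨u1, rfl, hadj1.symm⟩
  · intro x hx
    have hxA := delG_not_mem (⟨x, hx⟩ : ↥(delG G A).verts)
    have hxx1 : x ≠ x1 := fun h => hxA (h ▸ (by simp [hA] : x1 ∈ A))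
    have hxu1 : x ≠ u1 := fun h => hxA (h ▸ (by simp [hA] : u1 ∈ A))
    have hxv : x ≠ v := fun h => hxA (h ▸ (by simp [hA] : v ∈ A))
    by_cases hxy1 : x = y1
    · rw [if_pos (by simp [hxy1])]
      refine wt_lost_one_b hG x hx x1 (by simp [hA]) (by rw [hxy1]; exact hx1y1.symm) ?_
      intro w hw hadjw
      rw [hxy1] at hadjw
      rcases hmemA w hw with rfl | rfl | rfl
      · rfl
      · have h' := hadjw.symm
        rw [← SimpleGraph.mem_neighborSet, hNu1] at h'
        rcases h' with h | h
        · exact absurd h hy1v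
        · exact absurd h hy1x1
      · have h' := hadjw.symm
        rw [← SimpleGraph.mem_neighborSet, hNv] at h'
        rcases h' with h | h
        · exact absurd h hy1u1
        · exact absurd h hy1u2
    · by_cases hxu2 : x = u2
      · rw [if_pos (by simp [hxu2])]
        refine wt_lost_one_b hG x hx v (by simp [hA]) (by rw [hxu2]; exact hadj2.symm) ?_
        intro w hw hadjw
        rw [hxu2] at hadjw
        rcases hmemA w hw with rfl | rfl | rfl
        · exact (no4 hG hadj1 hu1x1 hadjw.symm hadj2.symm hx1v.symm h12).elim
        · have h' := hadjw.symm
          rw [← SimpleGraph.mem_neighborSet, hNu1] at h'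
          rcases h' with h | h
          · exact absurd h hadj2.ne'
          · exact absurd h hu2x1
        · rfl
      · rw [if_neg (by simp [hxy1, hxu2]), Nat.add_zero, wt_unaffected]
        intro w hw hadjw
        rcases hmemA w hw with rfl | rfl | rfl
        · exact not_adj_right hNx1 (by simp [hxu1, hxy1]) hadjw
        · exact not_adj_right hNu1 (by simp [hxv, hxx1]) hadjw
        · exact not_adj_right hNv (by simp [hxu1, hxu2]) hadjw
  · have hwtA : wtSet G A = 18 := by
      rw [hA,
          wtSet_insert (by
            simp only [Set.mem_insert_iff, Set.mem_singleton_iff]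
            push_neg
            exact ⟨hx1u1, hx1v⟩),
          wtSet_insert (by simpa using hadj1.ne'),
          wtSet_singleton, wt_of_deg2 hdx1, wt_of_deg2 hdu1, wt_of_deg2 hdv]
    rw [hwtA, Set.ncard_singleton, Finset.sum_pair hy1nu2]
    have hb1 : dbonus G y1 = 1 := by rw [dbonus, hdy1]; norm_num
    have hb2 : dbonus G u2 = 3 := by rw [dbonus, hdu2]; norm_num
    rw [hb1, hb2]

lemma L_final (hG : MinimalCounterexample G) {v u1 u2 x1 x2 y1 y2 : V}
    (hNv : G.neighborSet v = {u1, u2}) (h12 : u1 ≠ u2)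
    (hdu1 : deg G u1 = 2) (hdu2 : deg G u2 = 2) (hn12 : ¬ G.Adj u1 u2)
    (hNu1 : G.neighborSet u1 = {v, x1}) (hNu2 : G.neighborSet u2 = {v, x2})
    (hx1v : x1 ≠ v) (hx2v : x2 ≠ v)
    (hdx1 : deg G x1 = 2) (hdx2 : deg G x2 = 2)
    (hNx1 : G.neighborSet x1 = {u1, y1}) (hNx2 : G.neighborSet x2 = {u2, y2})
    (hy1u1 : y1 ≠ u1) (hy2u2 : y2 ≠ u2)
    (hy1x2 : y1 ≠ x2) (hy12 : y1 ≠ y2)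
    (hdy1 : deg G y1 = 2) (hdy2 : deg G y2 = 2) : False := by
  have hadj1 : G.Adj v u1 := by rw [← SimpleGraph.mem_neighborSet, hNv]; simp
  have hadj2 : G.Adj v u2 := by rw [← SimpleGraph.mem_neighborSet, hNv]; simp
  have hdv : deg G v = 2 := by rw [deg, hNv, Set.ncard_pair h12]
  have hu1x1 : G.Adj u1 x1 := by rw [← SimpleGraph.mem_neighborSet, hNu1]; simp
  have hu2x2 : G.Adj u2 x2 := by rw [← SimpleGraph.mem_neighborSet, hNu2]; simp
  have hx1y1 : G.Adj x1 y1 := by rw [← SimpleGraph.mem_neighborSet, hNx1]; simp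
  have hx2y2 : G.Adj x2 y2 := by rw [← SimpleGraph.mem_neighborSet, hNx2]; simp
  have hx1u1 : x1 ≠ u1 := hu1x1.ne'
  have hx2u2 : x2 ≠ u2 := hu2x2.ne'
  have hx1u2 : x1 ≠ u2 := by rintro rfl; exact hn12 hu1x1
  have hx2u1 : x2 ≠ u1 := by rintro rfl; exact hn12 hu2x2.symm
  have hx12 : x1 ≠ x2 := by
    rintro rfl
    exact no4 hG hadj1 hu1x1 hu2x2.symm hadj2.symm hx1v.symm h12
  have hnx1u2 : ¬ G.Adj x1 u2 := by
    intro h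
    exact no4 hG hadj1 hu1x1 h hadj2.symm hx1v.symm h12
  have hy1v : y1 ≠ v := by
    rintro rfl
    have : x1 ∈ G.neighborSet y1 := hx1y1.symm
    rw [hNv] at this
    rcases this with h | h
    · exact hx1u1 h
    · exact hx1u2 h
  have hy2v : y2 ≠ v := by
    rintro rfl
    have : x2 ∈ G.neighborSet y2 := hx2y2.symm
    rw [hNv] at this
    rcases this with h | h
    · exact hx2u1 h
    · exact hx2u2 h
  have hy1u2 : y1 ≠ u2 := by
    rintro rfl
    exact hnx1u2 hx1y1
  have hy2u1 : y2 ≠ u1 := by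
    rintro rfl
    have : x2 ∈ G.neighborSet y2 := hx2y2.symm
    rw [hNu1] at this
    rcases this with h | h
    · exact hx2v h
    · exact hx12 h.symm
  have hy1x1 : y1 ≠ x1 := hx1y1.ne'
  have hy2x2 : y2 ≠ x2 := hx2y2.ne'
  have hy2x1 : y2 ≠ x1 := by
    rintro rfl
    have : x2 ∈ G.neighborSet y2 := hx2y2.symm
    rw [hNx1] at this
    rcases this with h | h
    · exact hx2u1 h
    · exact hy1x2 h.symm
  obtain ⟨z1, hz1x1, hy1z1, hNy1⟩ := nbr_pair hdy1 hx1y1.symm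
  have hz1y1 : z1 ≠ y1 := hy1z1.ne'
  have hz1u1 : z1 ≠ u1 := by
    rintro rfl
    have : y1 ∈ G.neighborSet z1 := hy1z1.symm
    rw [hNu1] at this
    rcases this with h | h
    · exact hy1v h
    · exact hy1x1 h
  have hz1v : z1 ≠ v := by
    rintro rfl
    have : y1 ∈ G.neighborSet z1 := hy1z1.symm
    rw [hNv] at this
    rcases this with h | h
    · exact hy1u1 h
    · exact hy1u2 h
  have hz1u2 : z1 ≠ u2 := by
    rintro rfl
    have : y1 ∈ G.neighborSet z1 := hy1z1.symm
    rw [hNu2] at this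
    rcases this with h | h
    · exact hy1v h
    · exact hy1x2 h
  have hz1x2 : z1 ≠ x2 := by
    rintro rfl
    have : y1 ∈ G.neighborSet z1 := hy1z1.symm
    rw [hNx2] at this
    rcases this with h | h
    · exact hy1u2 h
    · exact hy12 h
  set A : Set V := {y1, x1, u1, v, u2, x2} with hA
  have hmemA : ∀ x ∈ A,
      x = y1 ∨ x = x1 ∨ x = u1 ∨ x = v ∨ x = u2 ∨ x = x2 := by
    intro x hx
    simpa only [hA, Set.mem_insert_iff, Set.mem_singleton_iff] using hx
  have hDmem : ∀ d ∈ ({x1, u2} : Set V), d = x1 ∨ d = u2 := by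
    intro d hd
    simpa only [Set.mem_insert_iff, Set.mem_singleton_iff] using hd
  have hy2A : y2 ∉ A := by
    simp only [hA, Set.mem_insert_iff, Set.mem_singleton_iff]
    push_neg
    exact ⟨hy12.symm, hy2x1, hy2u1, hy2v, hy2u2, hy2x2⟩
  have hz1A : z1 ∉ A := by
    simp only [hA, Set.mem_insert_iff, Set.mem_singleton_iff]
    push_neg
    exact ⟨hz1y1, hz1x1, hz1u1, hz1v, hz1u2, hz1x2⟩
  have hwtA : wtSet G A = 36 := by
    rw [hA,
        wtSet_insert (by
          simp only [Set.mem_insert_iff, Set.mem_singleton_iff]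
          push_neg
          exact ⟨hy1x1, hy1u1, hy1v, hy1u2, hy1x2⟩),
        wtSet_insert (by
          simp only [Set.mem_insert_iff, Set.mem_singleton_iff]
          push_neg
          exact ⟨hx1u1, hx1v, hx1u2, hx12⟩),
        wtSet_insert (by
          simp only [Set.mem_insert_iff, Set.mem_singleton_iff]
          push_neg
          exact ⟨hadj1.ne', h12, fun h => hx2u1 h.symm⟩),
        wtSet_insert (by
          simp only [Set.mem_insert_iff, Set.mem_singleton_iff]
          push_neg
          exact ⟨hadj2.ne, fun h => hx2v h.symm⟩),
        wtSet_insert (by simpa using fun h => hx2u2 h.symm),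
        wtSet_singleton, wt_of_deg2 hdy1, wt_of_deg2 hdx1, wt_of_deg2 hdu1,
        wt_of_deg2 hdv, wt_of_deg2 hdu2, wt_of_deg2 hdx2]
  have hx1nu2 : x1 ≠ u2 := hx1u2
  have hind : ∀ d1 ∈ ({x1, u2} : Set V), ∀ d2 ∈ ({x1, u2} : Set V), ¬ G.Adj d1 d2 := by
    intro d1 hD1 d2 hD2
    rcases hDmem d1 hD1 with h1 | h1 <;> rcases hDmem d2 hD2 with h2 | h2 <;>
      rw [h1, h2]
    · exact G.irrefl
    · exact hnx1u2
    · exact fun h => hnx1u2 h.symm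
    · exact G.irrefl
  have hcl : ∀ d ∈ ({x1, u2} : Set V), ∀ x : V, G.Adj d x → x ∈ A := by
    intro d hd x hadjx
    rcases hDmem d hd with h | h
    · rw [h] at hadjx
      have : x ∈ G.neighborSet x1 := hadjx
      rw [hNx1] at this
      rcases this with rfl | rfl <;> simp [hA]
    · rw [h] at hadjx
      have : x ∈ G.neighborSet u2 := hadjx
      rw [hNu2] at this
      rcases this with rfl | rfl <;> simp [hA]
  have hdom : ∀ x ∈ A, x ∈ ({x1, u2} : Set V) ∨ ∃ d ∈ ({x1, u2} : Set V), G.Adj d x := by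
    intro x hx
    rcases hmemA x hx with rfl | rfl | rfl | rfl | rfl | rfl
    · exact Or.inr ⟨x1, by simp, hx1y1⟩
    · exact Or.inl (by simp)
    · exact Or.inr ⟨x1, by simp, hu1x1.symm⟩
    · exact Or.inr ⟨u2, by simp, hadj2.symm⟩
    · exact Or.inl (by simp)
    · exact Or.inr ⟨u2, by simp, hu2x2⟩
  have hDA : ({x1, u2} : Set V) ⊆ A := by
    intro d hd
    rcases hDmem d hd with rfl | rfl <;> simp [hA]
  have hne : A.Nonempty := ⟨v, by simp [hA]⟩
  have hDcard : ({x1, u2} : Set V).ncard = 2 := Set.ncard_pair hx1nu2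
  by_cases hz1y2 : z1 = y2
  · -- z1 = y2 : seven-cycle-like configuration
    have hy1y2 : G.Adj y1 y2 := hz1y2 ▸ hy1z1
    have hNy2 : G.neighborSet y2 = {x2, y1} :=
      nbr_pair_of_adj hdy2 hx2y2.symm hy1y2.symm (fun h => hy1x2 h.symm)
    refine master hG A {x1, u2} hne hDA hind hcl hdom {y2} (fun _ => 8) ?_ ?_
    · intro x hx
      have hxA := delG_not_mem (⟨x, hx⟩ : ↥(delG G A).verts)
      have hxy1 : x ≠ y1 := fun h => hxA (h ▸ (by simp [hA] : y1 ∈ A))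
      have hxx1 : x ≠ x1 := fun h => hxA (h ▸ (by simp [hA] : x1 ∈ A))
      have hxu1 : x ≠ u1 := fun h => hxA (h ▸ (by simp [hA] : u1 ∈ A))
      have hxv : x ≠ v := fun h => hxA (h ▸ (by simp [hA] : v ∈ A))
      have hxu2 : x ≠ u2 := fun h => hxA (h ▸ (by simp [hA] : u2 ∈ A))
      have hxx2 : x ≠ x2 := fun h => hxA (h ▸ (by simp [hA] : x2 ∈ A))
      by_cases hxy2 : x = y2
      · rw [if_pos (by simp [hxy2])]
        have hempty : G.neighborSet x \ A = ∅ := by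
          rw [hxy2, hNy2, Set.diff_eq_empty]
          intro w hw
          rcases hw with rfl | rfl <;> simp [hA]
        rw [wtH_eval, hempty]
        have : wt G x = 6 := wt_of_deg2 (by rw [hxy2]; exact hdy2)
        rw [this]
        simp
      · rw [if_neg (by simpa using hxy2), Nat.add_zero, wt_unaffected]
        intro w hw hadjw
        rcases hmemA w hw with rfl | rfl | rfl | rfl | rfl | rfl
        · refine not_adj_right hNy1 ?_ hadjw
          rw [hz1y2]
          simp [hxx1, hxy2]
        · exact not_adj_right hNx1 (by simp [hxu1, hxy1]) hadjw
        · exact not_adj_right hNu1 (by simp [hxv, hxx1]) hadjw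
        · exact not_adj_right hNv (by simp [hxu1, hxu2]) hadjw
        · exact not_adj_right hNu2 (by simp [hxv, hxx2]) hadjw
        · exact not_adj_right hNx2 (by simp [hxu2, hxy2]) hadjw
    · rw [hwtA, hDcard, Finset.sum_singleton]
  · -- z1 ≠ y2
    refine master hG A {x1, u2} hne hDA hind hcl hdom {z1, y2}
      (fun w => if w = z1 then 5 else 3) ?_ ?_
    · intro x hx
      have hxA := delG_not_mem (⟨x, hx⟩ : ↥(delG G A).verts)
      have hxy1 : x ≠ y1 := fun h => hxA (h ▸ (by simp [hA] : y1 ∈ A))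
      have hxx1 : x ≠ x1 := fun h => hxA (h ▸ (by simp [hA] : x1 ∈ A))
      have hxu1 : x ≠ u1 := fun h => hxA (h ▸ (by simp [hA] : u1 ∈ A))
      have hxv : x ≠ v := fun h => hxA (h ▸ (by simp [hA] : v ∈ A))
      have hxu2 : x ≠ u2 := fun h => hxA (h ▸ (by simp [hA] : u2 ∈ A))
      have hxx2 : x ≠ x2 := fun h => hxA (h ▸ (by simp [hA] : x2 ∈ A))
      by_cases hxz1 : x = z1
      · rw [if_pos (by simp [hxz1] : x ∈ ({z1, y2} : Finset V))]
        show wt (delG G A).coe ⟨x, hx⟩ ≤ wt G x + (if x = z1 then 5 else 3)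
        rw [if_pos hxz1]
        refine wt_lost_one hG x hx y1 (by simp [hA]) (by rw [hxz1]; exact hy1z1.symm) ?_
        intro w hw hadjw
        rw [hxz1] at hadjw
        rcases hmemA w hw with rfl | rfl | rfl | rfl | rfl | rfl
        · rfl
        · have h' := hadjw.symm
          rw [← SimpleGraph.mem_neighborSet, hNx1] at h'
          rcases h' with h | h
          · exact absurd h hz1u1
          · exact absurd h hz1y1
        · have h' := hadjw.symm
          rw [← SimpleGraph.mem_neighborSet, hNu1] at h'
          rcases h' with h | h
          · exact absurd h hz1v
          · exact absurd h hz1x1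
        · have h' := hadjw.symm
          rw [← SimpleGraph.mem_neighborSet, hNv] at h'
          rcases h' with h | h
          · exact absurd h hz1u1
          · exact absurd h hz1u2
        · have h' := hadjw.symm
          rw [← SimpleGraph.mem_neighborSet, hNu2] at h'
          rcases h' with h | h
          · exact absurd h hz1v
          · exact absurd h hz1x2
        · have h' := hadjw.symm
          rw [← SimpleGraph.mem_neighborSet, hNx2] at h'
          rcases h' with h | h
          · exact absurd h hz1u2
          · exact absurd h (fun hh => hz1y2 hh)
      · by_cases hxy2 : x = y2
        · rw [if_pos (by simp [hxy2] : x ∈ ({z1, y2} : Finset V))]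
          show wt (delG G A).coe ⟨x, hx⟩ ≤ wt G x + (if x = z1 then 5 else 3)
          rw [if_neg (by rw [hxy2]; exact fun h => hz1y2 h.symm)]
          refine wt_lost_one' hG x hx x2 (by simp [hA]) (by rw [hxy2]; exact hx2y2.symm) ?_
            (by rw [hxy2]; omega)
          intro w hw hadjw
          rw [hxy2] at hadjw
          rcases hmemA w hw with rfl | rfl | rfl | rfl | rfl | rfl
          · have h' := hadjw.symm
            rw [← SimpleGraph.mem_neighborSet, hNy1] at h'
            rcases h' with h | h
            · exact absurd h hy2x1
            · exact absurd h (fun hh => hz1y2 hh.symm)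
          · have h' := hadjw.symm
            rw [← SimpleGraph.mem_neighborSet, hNx1] at h'
            rcases h' with h | h
            · exact absurd h hy2u1
            · exact absurd h hy12.symm
          · have h' := hadjw.symm
            rw [← SimpleGraph.mem_neighborSet, hNu1] at h'
            rcases h' with h | h
            · exact absurd h hy2v
            · exact absurd h hy2x1
          · have h' := hadjw.symm
            rw [← SimpleGraph.mem_neighborSet, hNv] at h'
            rcases h' with h | h
            · exact absurd h hy2u1
            · exact absurd h hy2u2
          · have h' := hadjw.symm
            rw [← SimpleGraph.mem_neighborSet, hNu2] at h'
            rcases h' with h | h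
            · exact absurd h hy2v
            · exact absurd h hy2x2
          · rfl
        · rw [if_neg (by simp [hxz1, hxy2]), Nat.add_zero, wt_unaffected]
          intro w hw hadjw
          rcases hmemA w hw with rfl | rfl | rfl | rfl | rfl | rfl
          · exact not_adj_right hNy1 (by simp [hxx1, hxz1]) hadjw
          · exact not_adj_right hNx1 (by simp [hxu1, hxy1]) hadjw
          · exact not_adj_right hNu1 (by simp [hxv, hxx1]) hadjw
          · exact not_adj_right hNv (by simp [hxu1, hxu2]) hadjw
          · exact not_adj_right hNu2 (by simp [hxv, hxx2]) hadjw
          · exact not_adj_right hNx2 (by simp [hxu2, hxy2]) hadjw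
    · rw [hwtA, hDcard, Finset.sum_pair (fun h => hz1y2 h : z1 ≠ y2)]
      have e1 : (if z1 = z1 then (5:ℕ) else 3) = 5 := if_pos rfl
      have e2 : (if y2 = z1 then (5:ℕ) else 3) = 3 := if_neg (fun h => hz1y2 h.symm)
      simp only [e1, e2]
      norm_num

end Deg2e

section Driver
variable {V : Type*} [Fintype V] [DecidableEq V] {G : SimpleGraph V}

lemma caseDeg2 (hG : MinimalCounterexample G) {v : V} (hdv : deg G v = 2)
    (hnb : ∀ u, G.Adj v u → deg G u ≤ 2) : False := by
  have hdv' := hdv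
  rw [deg, Set.ncard_eq_two] at hdv'
  obtain ⟨u1, u2, h12, hNv⟩ := hdv'
  have hadj1 : G.Adj v u1 := by rw [← SimpleGraph.mem_neighborSet, hNv]; simp
  have hadj2 : G.Adj v u2 := by rw [← SimpleGraph.mem_neighborSet, hNv]; simp
  have hd1le : deg G u1 ≤ 2 := hnb u1 hadj1
  have hd2le : deg G u2 ≤ 2 := hnb u2 hadj2
  have hd1ge : 1 ≤ deg G u1 := one_le_deg_of_adj hadj1.symm
  have hd2ge : 1 ≤ deg G u2 := one_le_deg_of_adj hadj2.symm
  have hNv' : G.neighborSet v = {u2, u1} := by rw [hNv, Set.pair_comm]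
  by_cases hadj12 : G.Adj u1 u2
  · exact L_tri hG hNv h12 hd1le hd2le hadj12
  rcases (by omega : deg G u1 = 1 ∨ deg G u1 = 2) with hdu1 | hdu1
  · exact L_pend hG hNv h12 hdu1 hd2le
  rcases (by omega : deg G u2 = 1 ∨ deg G u2 = 2) with hdu2 | hdu2
  · exact L_pend hG hNv' (Ne.symm h12) hdu2 hd1le
  obtain ⟨x1, hx1v, hu1x1, hNu1⟩ := nbr_pair hdu1 hadj1.symm
  obtain ⟨x2, hx2v, hu2x2, hNu2⟩ := nbr_pair hdu2 hadj2.symm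
  by_cases hx3 : deg G x1 = 2 ∧ deg G x2 = 2
  swap
  · exact L_x3 hG hNv h12 hdu1 hdu2 hadj12 hNu1 hNu2 hx1v hx2v hx3
  obtain ⟨hdx1, hdx2⟩ := hx3
  obtain ⟨y1, hy1u1, hx1y1, hNx1⟩ := nbr_pair hdx1 hu1x1.symm
  obtain ⟨y2, hy2u2, hx2y2, hNx2⟩ := nbr_pair hdx2 hu2x2.symm
  by_cases hy1x2 : y1 = x2
  · exact L_C5 hG hNv h12 hdu1 hdu2 hadj12 hNu1 hNu2 hx1v hx2v hdx1 hdx2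
      (hy1x2 ▸ hx1y1)
  by_cases hy2x1 : y2 = x1
  · exact L_C5 hG hNv' (Ne.symm h12) hdu2 hdu1 (fun h => hadj12 h.symm) hNu2 hNu1
      hx2v hx1v hdx2 hdx1 (hy2x1 ▸ hx2y2)
  by_cases hyy : y1 = y2
  · have hNx2' : G.neighborSet x2 = {u2, y1} := by rw [hNx2, hyy]
    exact L_C6 hG hNv h12 hdu1 hdu2 hadj12 hNu1 hNu2 hx1v hx2v hdx1 hdx2 hNx1 hNx2'
  have hdy1ge : 2 ≤ deg G y1 := by
    have hge : 1 ≤ deg G y1 := one_le_deg_of_adj hx1y1.symm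
    rcases (by omega : deg G y1 = 1 ∨ 2 ≤ deg G y1) with h1 | h2
    · exact absurd (Bplus hG hx1y1 h1 hdx1) not_false
    · exact h2
  have hdy2ge : 2 ≤ deg G y2 := by
    have hge : 1 ≤ deg G y2 := one_le_deg_of_adj hx2y2.symm
    rcases (by omega : deg G y2 = 1 ∨ 2 ≤ deg G y2) with h1 | h2
    · exact absurd (Bplus hG hx2y2 h1 hdx2) not_false
    · exact h2
  have hdy1le : deg G y1 ≤ 3 := hG.1 y1
  have hdy2le : deg G y2 ≤ 3 := hG.1 y2
  rcases (by omega : deg G y1 = 3 ∨ deg G y1 = 2) with hdy1 | hdy1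
  · exact L_y3 hG hNv h12 hdu1 hdu2 hadj12 hNu1 hNu2 hx1v hx2v hdx1 hNx1 hy1u1
      hy1x2 hdy1
  rcases (by omega : deg G y2 = 3 ∨ deg G y2 = 2) with hdy2 | hdy2
  · exact L_y3 hG hNv' (Ne.symm h12) hdu2 hdu1 (fun h => hadj12 h.symm) hNu2 hNu1
      hx2v hx1v hdx2 hNx2 hy2u2 hy2x1 hdy2
  exact L_final hG hNv h12 hdu1 hdu2 hadj12 hNu1 hNu2 hx1v hx2v hdx1 hdx2 hNx1 hNx2
    hy1u1 hy2u2 hy1x2 hyy hdy1 hdy2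

end Driver


/-- A minimal counterexample has no vertex of degree at least 1 all of whose
neighbors have degree at most 2. -/
theorem no_vertex_with_only_low_degree_neighbors {V : Type*} [Fintype V]
    (G : SimpleGraph V) (hG : MinimalCounterexample G) :
    ¬ ∃ v : V, 1 ≤ deg G v ∧ ∀ u, G.Adj v u → deg G u ≤ 2 := by
  classical
  rintro ⟨v, hv1, hnb⟩
  have hv3 : deg G v ≤ 3 := hG.1 v
  rcases (by omega : deg G v = 1 ∨ deg G v = 2 ∨ deg G v = 3) with hdv | hdv | hdv
  · have hdv' := hdv
    rw [deg, Set.ncard_eq_one] at hdv'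
    obtain ⟨u, hNv⟩ := hdv'
    have hadj : G.Adj v u := by rw [← SimpleGraph.mem_neighborSet, hNv]; simp
    have hule : deg G u ≤ 2 := hnb u hadj
    have huge : 1 ≤ deg G u := one_le_deg_of_adj hadj.symm
    rcases (by omega : deg G u = 1 ∨ deg G u = 2) with hdu | hdu
    · exact B0 hG hadj.symm hdv hdu
    · exact Bplus hG hadj.symm hdv hdu
  · exact caseDeg2 hG hdv hnb
  · exact caseDeg3 hG hdv hnb
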